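/- arXiv:1505.06898 — 3 statements merged into one kernel-verified Lean document; each statement's English description precedes it below -/
import Mathlib

section
/- There exist a rooted phylogenetic network N on X = {1,2,3,4} with exactly one reticulation displaying exactly two trees T₁ and T₂, a 2-state character χ on X with PS(χ,T₁) = 1 and PS(χ,T₂) = 2, and a probability distribution P(T₁|N,χ) = 1/4, P(T₂|N,χ) = 3/4 on the displayed trees, such that the weighted softwired maximum likelihood max_{T ∈ {T₁,T₂}} P(T|N,χ)·max P(χ|T) equals 3/32 ≠ 2^{−PS_soft(χ,N)−1} = 1/4 and is attained by T₂ rather than the tree T₁ of smaller parsimony score. -/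
open scoped Classical

structure Digraph' (V : Type) where
  edges : Finset (V × V)

namespace Digraph'

variable {V W X C : Type}

noncomputable def indeg (G : Digraph' V) (v : V) : ℕ :=
  (G.edges.filter fun e => e.2 = v).card

noncomputable def outdeg (G : Digraph' V) (v : V) : ℕ :=
  (G.edges.filter fun e => e.1 = v).card

def Acyclic (G : Digraph' V) : Prop :=
  ∀ v : V, ¬ Relation.TransGen (fun a b => (a, b) ∈ G.edges) v v

/-- changing number: edges whose endpoints get different states -/
noncomputable def ch (G : Digraph' V) (f : V → C) : ℕ :=
  (G.edges.filter fun e => f e.1 ≠ f e.2).card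

/-- `f` extends the character `χ` on the (distinguished) leaves -/
def Extends (leaf : X → V) (χ : X → C) (f : V → C) : Prop :=
  ∀ x, f (leaf x) = χ x

/-- hardwired parsimony score -/
noncomputable def psHard (G : Digraph' V) (leaf : X → V) (χ : X → C) : ℕ :=
  sInf {n | ∃ f : V → C, Extends leaf χ f ∧ ch G f = n}

structure IsPhyloNetwork (G : Digraph' V) (root : V) (leaf : X → V) : Prop where
  acyclic : G.Acyclic
  leaf_inj : Function.Injective leaf
  reach : ∀ v : V, Relation.ReflTransGen (fun a b => (a, b) ∈ G.edges) root v
  leaf_iff : ∀ v : V, (∃ x, leaf x = v) ↔ G.indeg v = 1 ∧ G.outdeg v = 0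
  root_out : 2 ≤ G.outdeg root
  root_in : G.indeg root = 0
  internal : ∀ v : V, v ≠ root → ¬(∃ x, leaf x = v) →
      (G.indeg v = 1 ∧ 2 ≤ G.outdeg v) ∨ (2 ≤ G.indeg v ∧ G.outdeg v = 1)

def IsPhyloTree (G : Digraph' V) (root : V) (leaf : X → V) : Prop :=
  IsPhyloNetwork G root leaf ∧ ∀ v : V, G.indeg v ≤ 1

def IsBinaryPhyloTree (G : Digraph' V) (root : V) (leaf : X → V) : Prop :=
  IsPhyloTree G root leaf ∧ G.outdeg root = 2 ∧
    ∀ v : V, v ≠ root → ¬(∃ x, leaf x = v) → G.outdeg v = 2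

def internalVerts (l : List V) : List V := (l.drop 1).dropLast

def pathEdges (l : List V) : List (V × V) := l.zip l.tail

/-- `T` is displayed by `N`: an embedding of a subdivision of `T` into `N`,
    mapping leaves to leaves, tree edges to directed paths that are internally
    disjoint from each other and from the images of tree vertices. -/
def Displays (N : Digraph' V) (leafN : X → V) (T : Digraph' W) (leafT : X → W) : Prop :=
  ∃ φ : W → V, Function.Injective φ ∧ (∀ x, φ (leafT x) = leafN x) ∧
    ∃ P : W → W → List V, ∀ e ∈ T.edges,
      (P e.1 e.2).Chain' (fun a b => (a, b) ∈ N.edges) ∧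
      (P e.1 e.2).head? = some (φ e.1) ∧
      (P e.1 e.2).getLast? = some (φ e.2) ∧
      2 ≤ (P e.1 e.2).length ∧
      (P e.1 e.2).Nodup ∧
      (∀ w ∈ internalVerts (P e.1 e.2), w ∉ Set.range φ) ∧
      ∀ e' ∈ T.edges, e ≠ e' →
        (∀ w ∈ internalVerts (P e.1 e.2), w ∉ internalVerts (P e'.1 e'.2)) ∧
        ∀ p ∈ pathEdges (P e.1 e.2), p ∉ pathEdges (P e'.1 e'.2)

/-- softwired parsimony score of a single character -/
noncomputable def psSoft (N : Digraph' V) (leafN : X → V) (χ : X → C) : ℕ :=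
  sInf {n | ∃ (W : Type) (T : Digraph' W) (rootT : W) (leafT : X → W),
    IsPhyloTree T rootT leafT ∧ Displays N leafN T leafT ∧ psHard T leafT χ = n}

noncomputable def psHardSeq (G : Digraph' V) (leaf : X → V) {k : ℕ} (S : Fin k → X → C) : ℕ :=
  ∑ i, psHard G leaf (S i)

noncomputable def psSoftSeq (N : Digraph' V) (leafN : X → V) {k : ℕ} (S : Fin k → X → C) : ℕ :=
  ∑ i, psSoft N leafN (S i)

/-- a switching keeps all edges into non-reticulations and exactly one
    in-edge per reticulation -/
def IsSwitching (N T : Digraph' V) : Prop :=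
  T.edges ⊆ N.edges ∧ (∀ e ∈ N.edges, N.indeg e.2 ≤ 1 → e ∈ T.edges) ∧
    ∀ v : V, 2 ≤ N.indeg v → T.indeg v = 1

/-- number of negligible edges under `f` -/
noncomputable def negl (N : Digraph' V) (f : V → C) : ℕ :=
  (N.edges.filter fun e =>
    2 ≤ N.indeg e.2 ∧ f e.1 ≠ f e.2 ∧ ∃ p, (p, e.2) ∈ N.edges ∧ f p = f e.2).card

/-- isomorphism of leaf-labelled digraphs -/
def Iso {W' : Type} (T : Digraph' W) (leafT : X → W) (T' : Digraph' W') (leafT' : X → W') : Prop :=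
  ∃ g : W ≃ W', (∀ u v : W, (u, v) ∈ T.edges ↔ (g u, g v) ∈ T'.edges) ∧
    ∀ x, g (leafT x) = leafT' x

end Digraph'

open Digraph'

/-! ### list lemmas -/
section ListLemmas
variable {α : Type} {R : α → α → Prop}

lemma pathEdges_cons_cons (a b : α) (t : List α) :
    Digraph'.pathEdges (a::b::t) = (a,b) :: Digraph'.pathEdges (b::t) := rfl

lemma internalVerts_cons_cons (a b : α) (s : List α) :
    Digraph'.internalVerts (a::b::s) = (b::s).dropLast := rfl

lemma chain'_iff_pathEdges (R : α → α → Prop) (l : List α) :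
    l.Chain' R ↔ ∀ p ∈ Digraph'.pathEdges l, R p.1 p.2 := by
  induction l with
  | nil => simp [Digraph'.pathEdges, List.Chain']
  | cons a t ih =>
    cases t with
    | nil => simp [Digraph'.pathEdges, List.Chain']
    | cons b s =>
      simp only [List.Chain'] at ih ⊢
      rw [List.isChain_cons_cons, pathEdges_cons_cons]
      constructor
      · rintro ⟨hab, hc⟩ p hp
        rcases List.mem_cons.mp hp with rfl | hp
        · exact hab
        · exact (ih.mp hc) p hp
      · intro h
        exact ⟨h (a,b) (List.mem_cons_self), ih.mpr fun p hp => h p (List.mem_cons_of_mem _ hp)⟩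

lemma mem_snd_of_pathEdges {l : List α} {u v : α} (h : (u,v) ∈ Digraph'.pathEdges l) :
    v ∈ l.tail := (List.of_mem_zip h).2

lemma snd_pathEdges_cases {l : List α} {u v : α} (h : (u,v) ∈ Digraph'.pathEdges l) :
    v ∈ Digraph'.internalVerts l ∨ l.getLast? = some v := by
  induction l with
  | nil => simp [Digraph'.pathEdges] at h
  | cons a t ih =>
    cases t with
    | nil => simp [Digraph'.pathEdges, Digraph'.internalVerts] at h
    | cons b s =>
      rw [pathEdges_cons_cons] at h
      rcases List.mem_cons.mp h with heq | hmem
      · have hv : v = b := congrArg Prod.snd heq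
        subst hv
        cases s with
        | nil => right; simp
        | cons c s' =>
          left
          rw [internalVerts_cons_cons, List.dropLast_cons₂]
          exact List.mem_cons_self
      · rcases ih hmem with hint | hlast
        · left
          cases s with
          | nil => simp [Digraph'.internalVerts] at hint
          | cons c s' =>
            rw [internalVerts_cons_cons, List.dropLast_cons₂]
            rw [internalVerts_cons_cons] at hint
            exact List.mem_cons_of_mem _ hint
        · right
          rw [List.getLast?_cons_cons]
          exact hlast

lemma fst_pathEdges_cases {l : List α} {u v : α} (h : (u,v) ∈ Digraph'.pathEdges l) :
    u ∈ Digraph'.internalVerts l ∨ l.head? = some u := by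
  induction l with
  | nil => simp [Digraph'.pathEdges] at h
  | cons a t ih =>
    cases t with
    | nil => simp [Digraph'.pathEdges] at h
    | cons b s =>
      rw [pathEdges_cons_cons] at h
      rcases List.mem_cons.mp h with heq | hmem
      · right
        have hu : u = a := congrArg Prod.fst heq
        subst hu; rfl
      · have hs : s ≠ [] := by
          intro hs; subst hs
          simp [Digraph'.pathEdges] at hmem
        obtain ⟨c, s', rfl⟩ := List.exists_cons_of_ne_nil hs
        rcases ih hmem with hint | hhead
        · left
          rw [internalVerts_cons_cons, List.dropLast_cons₂]
          rw [internalVerts_cons_cons] at hint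
          exact List.mem_cons_of_mem _ hint
        · left
          have hu : u = b := by simpa using hhead.symm
          subst hu
          rw [internalVerts_cons_cons, List.dropLast_cons₂]
          exact List.mem_cons_self

lemma pred_unique {l : List α} (hnd : l.Nodup) {u u' v : α}
    (h : (u,v) ∈ Digraph'.pathEdges l) (h' : (u',v) ∈ Digraph'.pathEdges l) : u = u' := by
  induction l with
  | nil => simp [Digraph'.pathEdges] at h
  | cons a t ih =>
    cases t with
    | nil => simp [Digraph'.pathEdges] at h
    | cons b s =>
      rw [pathEdges_cons_cons] at h h'
      have hbs : b ∉ s := by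
        have := hnd
        simp only [List.nodup_cons, List.mem_cons] at this
        exact this.2.1
      rcases List.mem_cons.mp h with heq | hmem <;> rcases List.mem_cons.mp h' with heq' | hmem'
      · have h1 : u = a := congrArg Prod.fst heq
        have h2 : u' = a := congrArg Prod.fst heq'
        rw [h1, h2]
      · have hv : v = b := congrArg Prod.snd heq
        subst hv
        exact absurd (mem_snd_of_pathEdges hmem') hbs
      · have hv : v = b := congrArg Prod.snd heq'
        subst hv
        exact absurd (mem_snd_of_pathEdges hmem) hbs
      · exact ih (List.nodup_cons.mp hnd).2 hmem hmem'

end ListLemmas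
set_option maxRecDepth 1000000

/-! ### computable rewriting lemmas -/

lemma indeg_eq {V : Type} [DecidableEq V] (G : Digraph' V) (v : V) :
    G.indeg v = (G.edges.filter fun e => e.2 = v).card := by
  unfold Digraph'.indeg; rw [Finset.filter_congr_decidable]

lemma outdeg_eq {V : Type} [DecidableEq V] (G : Digraph' V) (v : V) :
    G.outdeg v = (G.edges.filter fun e => e.1 = v).card := by
  unfold Digraph'.outdeg; rw [Finset.filter_congr_decidable]

lemma ch_eq {V C : Type} [DecidableEq V] [DecidableEq C] (G : Digraph' V) (f : V → C) :
    G.ch f = (G.edges.filter fun e => f e.1 ≠ f e.2).card := by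
  unfold Digraph'.ch; rw [Finset.filter_congr_decidable]

lemma acyclic_of_rank {V : Type} (G : Digraph' V) (r : V → ℕ)
    (h : ∀ e ∈ G.edges, r e.1 < r e.2) : G.Acyclic := by
  intro v hv
  have key : ∀ a b, Relation.TransGen (fun a b => (a, b) ∈ G.edges) a b → r a < r b := by
    intro a b hab
    induction hab with
    | single h' => exact h _ h'
    | tail _ h' ih => exact lt_trans ih (h _ h')
  exact lt_irrefl _ (key v v hv)

/-! ### concrete objects -/

def Nd : Digraph' (Fin 9) := ⟨{(0,1),(0,3),(1,5),(1,4),(4,6),(3,2),(3,8),(2,7),(2,4)}⟩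
def leafNd : Fin 4 → Fin 9 := ![5,6,7,8]

def T1 : Digraph' (Fin 7) := ⟨{(4,5),(4,6),(5,0),(5,1),(6,2),(6,3)}⟩
def T2 : Digraph' (Fin 7) := ⟨{(4,0),(4,5),(5,6),(5,3),(6,1),(6,2)}⟩
def lf7 : Fin 4 → Fin 7 := ![0,1,2,3]
def chi : Fin 4 → Bool := ![false,false,true,true]

/-! ### N is a phylogenetic network -/

lemma hNnet : Digraph'.IsPhyloNetwork Nd 0 leafNd := by
  refine ⟨acyclic_of_rank Nd ![0,1,2,1,3,4,4,4,4] (by decide), by decide, ?_, ?_, ?_, ?_, ?_⟩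
  · have e01 : ((0 : Fin 9), (1 : Fin 9)) ∈ Nd.edges := by decide
    have e03 : ((0 : Fin 9), (3 : Fin 9)) ∈ Nd.edges := by decide
    have e15 : ((1 : Fin 9), (5 : Fin 9)) ∈ Nd.edges := by decide
    have e14 : ((1 : Fin 9), (4 : Fin 9)) ∈ Nd.edges := by decide
    have e46 : ((4 : Fin 9), (6 : Fin 9)) ∈ Nd.edges := by decide
    have e32 : ((3 : Fin 9), (2 : Fin 9)) ∈ Nd.edges := by decide
    have e38 : ((3 : Fin 9), (8 : Fin 9)) ∈ Nd.edges := by decide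
    have e27 : ((2 : Fin 9), (7 : Fin 9)) ∈ Nd.edges := by decide
    have e24 : ((2 : Fin 9), (4 : Fin 9)) ∈ Nd.edges := by decide
    intro v; fin_cases v
    · exact .refl
    · exact .single e01
    · exact .tail (.single e03) e32
    · exact .single e03
    · exact .tail (.single e01) e14
    · exact .tail (.single e01) e15
    · exact .tail (.tail (.single e01) e14) e46
    · exact .tail (.tail (.single e03) e32) e27
    · exact .tail (.single e03) e38
  · intro v; simp only [indeg_eq, outdeg_eq]; revert v; decide
  · rw [outdeg_eq]; decide
  · rw [indeg_eq]; decide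
  · intro v hv hl; simp only [indeg_eq, outdeg_eq]; revert hl hv; revert v; decide

lemma hretic : ∃! v : Fin 9, 2 ≤ Nd.indeg v := by
  have h : ∀ v : Fin 9, 2 ≤ Nd.indeg v ↔ v = 4 := by
    intro v; rw [indeg_eq]; revert v; decide
  exact ⟨4, (h 4).mpr rfl, fun v hv => (h v).mp hv⟩

/-! ### T1 T2 are phylogenetic trees -/

lemma hT1tree : Digraph'.IsPhyloTree T1 4 lf7 := by
  refine ⟨⟨acyclic_of_rank T1 ![2,2,2,2,0,1,1] (by decide), by decide, ?_, ?_, ?_, ?_, ?_⟩, ?_⟩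
  · have e5 : ((4 : Fin 7), (5 : Fin 7)) ∈ T1.edges := by decide
    have e6 : ((4 : Fin 7), (6 : Fin 7)) ∈ T1.edges := by decide
    have e0 : ((5 : Fin 7), (0 : Fin 7)) ∈ T1.edges := by decide
    have e1 : ((5 : Fin 7), (1 : Fin 7)) ∈ T1.edges := by decide
    have e2 : ((6 : Fin 7), (2 : Fin 7)) ∈ T1.edges := by decide
    have e3 : ((6 : Fin 7), (3 : Fin 7)) ∈ T1.edges := by decide
    intro v; fin_cases v
    · exact .tail (.single e5) e0
    · exact .tail (.single e5) e1
    · exact .tail (.single e6) e2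
    · exact .tail (.single e6) e3
    · exact .refl
    · exact .single e5
    · exact .single e6
  · intro v; simp only [indeg_eq, outdeg_eq]; revert v; decide
  · rw [outdeg_eq]; decide
  · rw [indeg_eq]; decide
  · intro v hv hl; simp only [indeg_eq, outdeg_eq]; revert hl hv; revert v; decide
  · intro v; rw [indeg_eq]; revert v; decide

lemma hT2tree : Digraph'.IsPhyloTree T2 4 lf7 := by
  refine ⟨⟨acyclic_of_rank T2 ![3,3,3,3,0,1,2] (by decide), by decide, ?_, ?_, ?_, ?_, ?_⟩, ?_⟩
  · have e0 : ((4 : Fin 7), (0 : Fin 7)) ∈ T2.edges := by decide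
    have e5 : ((4 : Fin 7), (5 : Fin 7)) ∈ T2.edges := by decide
    have e6 : ((5 : Fin 7), (6 : Fin 7)) ∈ T2.edges := by decide
    have e3 : ((5 : Fin 7), (3 : Fin 7)) ∈ T2.edges := by decide
    have e1 : ((6 : Fin 7), (1 : Fin 7)) ∈ T2.edges := by decide
    have e2 : ((6 : Fin 7), (2 : Fin 7)) ∈ T2.edges := by decide
    intro v; fin_cases v
    · exact .single e0
    · exact .tail (.tail (.single e5) e6) e1
    · exact .tail (.tail (.single e5) e6) e2
    · exact .tail (.single e5) e3
    · exact .refl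
    · exact .single e5
    · exact .tail (.single e5) e6
  · intro v; simp only [indeg_eq, outdeg_eq]; revert v; decide
  · rw [outdeg_eq]; decide
  · rw [indeg_eq]; decide
  · intro v hv hl; simp only [indeg_eq, outdeg_eq]; revert hl hv; revert v; decide
  · intro v; rw [indeg_eq]; revert v; decide
/-! ### Displays -/

def phi1 : Fin 7 → Fin 9 := ![5,6,7,8,0,1,3]
def P1t : Fin 7 → Fin 7 → List (Fin 9) := fun u v =>
  if u = 4 ∧ v = 5 then [0,1] else if u = 4 ∧ v = 6 then [0,3]
  else if u = 5 ∧ v = 0 then [1,5] else if u = 5 ∧ v = 1 then [1,4,6]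
  else if u = 6 ∧ v = 2 then [3,2,7] else if u = 6 ∧ v = 3 then [3,8] else []

lemma hDisp1 : Digraph'.Displays Nd leafNd T1 lf7 := by
  refine ⟨phi1, by decide, by decide, P1t, ?_⟩
  intro e he
  fin_cases he <;>
    refine ⟨by rw [chain'_iff_pathEdges]; decide, by decide, by decide, by decide, by decide,
      by simp only [Set.mem_range]; decide, ?_⟩ <;>
    · intro e' he' hne
      fin_cases he' <;>
        first
          | exact absurd rfl hne
          | exact ⟨by decide, by decide⟩

def phi2 : Fin 7 → Fin 9 := ![5,6,7,8,0,3,2]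
def P2t : Fin 7 → Fin 7 → List (Fin 9) := fun u v =>
  if u = 4 ∧ v = 0 then [0,1,5] else if u = 4 ∧ v = 5 then [0,3]
  else if u = 5 ∧ v = 6 then [3,2] else if u = 5 ∧ v = 3 then [3,8]
  else if u = 6 ∧ v = 1 then [2,4,6] else if u = 6 ∧ v = 2 then [2,7] else []

lemma hDisp2 : Digraph'.Displays Nd leafNd T2 lf7 := by
  refine ⟨phi2, by decide, by decide, P2t, ?_⟩
  intro e he
  fin_cases he <;>
    refine ⟨by rw [chain'_iff_pathEdges]; decide, by decide, by decide, by decide, by decide,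
      by simp only [Set.mem_range]; decide, ?_⟩ <;>
    · intro e' he' hne
      fin_cases he' <;>
        first
          | exact absurd rfl hne
          | exact ⟨by decide, by decide⟩

/-! ### not isomorphic -/

lemma hNotIso : ¬ Digraph'.Iso T1 lf7 T2 lf7 := by
  rintro ⟨g, hg, hl⟩
  have h0 : g 0 = 0 := hl 0
  have h1 : g 1 = 1 := hl 1
  have h50 : ((5 : Fin 7), (0 : Fin 7)) ∈ T1.edges := by decide
  have h51 : ((5 : Fin 7), (1 : Fin 7)) ∈ T1.edges := by decide
  have hg5 : g 5 = 4 := by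
    have := (hg 5 0).mp h50; rw [h0] at this
    revert this; revert hg; generalize g 5 = u; intro _; revert u; decide
  have := (hg 5 1).mp h51
  rw [hg5, h1] at this
  exact absurd this (by decide)
/-! ### parsimony scores -/

lemma sInf_eq_one {S : Set ℕ} (h1 : 1 ∈ S) (h0 : 0 ∉ S) : sInf S = 1 := by
  have hle := Nat.sInf_le h1
  have hmem := Nat.sInf_mem (⟨1, h1⟩ : S.Nonempty)
  have : sInf S ≠ 0 := fun h => h0 (h ▸ hmem)
  omega

lemma sInf_eq_two {S : Set ℕ} (h2 : 2 ∈ S) (h0 : 0 ∉ S) (h1 : 1 ∉ S) : sInf S = 2 := by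
  have hle := Nat.sInf_le h2
  have hmem := Nat.sInf_mem (⟨2, h2⟩ : S.Nonempty)
  have g0 : sInf S ≠ 0 := fun h => h0 (h ▸ hmem)
  have g1 : sInf S ≠ 1 := fun h => h1 (h ▸ hmem)
  omega

lemma hps1 : Digraph'.psHard T1 lf7 chi = 1 := by
  apply sInf_eq_one
  · exact ⟨![false,false,true,true,false,false,true],
      by simp only [Digraph'.Extends]; decide, by rw [ch_eq]; decide⟩
  · rintro ⟨f, hext, hch⟩
    rw [ch_eq] at hch
    revert hch; revert hext
    simp only [Digraph'.Extends]
    revert f; decide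

lemma hps2 : Digraph'.psHard T2 lf7 chi = 2 := by
  apply sInf_eq_two
  · exact ⟨![false,false,true,true,false,true,true],
      by simp only [Digraph'.Extends]; decide, by rw [ch_eq]; decide⟩
  · rintro ⟨f, hext, hch⟩
    rw [ch_eq] at hch
    revert hch; revert hext
    simp only [Digraph'.Extends]
    revert f; decide
  · rintro ⟨f, hext, hch⟩
    rw [ch_eq] at hch
    revert hch; revert hext
    simp only [Digraph'.Extends]
    revert f; decide

/-- no displayed tree can have parsimony score 0 -/
lemma psHard_ne_zero {W : Type} (T : Digraph' W) (rootT : W) (leafT : Fin 4 → W)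
    (hT : Digraph'.IsPhyloTree T rootT leafT) : Digraph'.psHard T leafT chi ≠ 0 := by
  intro hps
  -- the defining set is nonempty
  have hne : {n | ∃ f : W → Bool, Digraph'.Extends leafT chi f ∧ Digraph'.ch T f = n}.Nonempty := by
    refine ⟨_, fun w => if h : ∃ x, leafT x = w then chi h.choose else false, ?_, rfl⟩
    intro x
    have hx : ∃ x', leafT x' = leafT x := ⟨x, rfl⟩
    change (if h : ∃ x', leafT x' = leafT x then chi h.choose else false) = chi x
    rw [dif_pos hx]
    congr 1
    exact hT.1.leaf_inj hx.choose_spec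
  have h0 := Nat.sInf_mem hne
  rw [show sInf {n | ∃ f : W → Bool, Digraph'.Extends leafT chi f ∧ Digraph'.ch T f = n}
      = Digraph'.psHard T leafT chi from rfl, hps] at h0
  obtain ⟨f, hext, hch⟩ := h0
  simp only [Digraph'.ch] at hch
  rw [Finset.filter_congr_decidable, Finset.card_eq_zero, Finset.filter_eq_empty_iff] at hch
  have hconst : ∀ v, f v = f rootT := by
    intro v
    have hr := hT.1.reach v
    induction hr with
    | refl => rfl
    | tail hab e ih =>
      have : ¬ (f _ ≠ f _) := hch e
      rw [not_not] at this
      rw [← this]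
      exact ih
  have h02 : f (leafT 0) = f (leafT 2) := (hconst _).trans (hconst _).symm
  rw [hext 0, hext 2] at h02
  exact absurd h02 (by decide)

lemma hpsSoft : Digraph'.psSoft Nd leafNd chi = 1 := by
  apply sInf_eq_one
  · exact ⟨Fin 7, T1, 4, lf7, hT1tree, hDisp1, hps1⟩
  · rintro ⟨W, T, rootT, leafT, hT, hD, hps⟩
    exact psHard_ne_zero T rootT leafT hT hps
/-! ### structure of any displayed tree -/

lemma display_structure (ex : Fin 9 × Fin 9) (S3 : Finset (Fin 9))
    (hdeg : ∀ v : Fin 9, (Nd.edges.filter fun f => f.1 = v ∧ f ≠ ex).card ≤ 2)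
    (hmem3 : ∀ v : Fin 9, 2 ≤ (Nd.edges.filter fun f => f.1 = v ∧ f ≠ ex).card → v ∈ S3)
    (hS3 : S3.card = 3)
    {W : Type} [Fintype W] {T : Digraph' W} {rootT : W} {leafT : Fin 4 → W}
    (hT : Digraph'.IsPhyloTree T rootT leafT)
    (φ : W → Fin 9) (hinj : Function.Injective φ) (hleaf : ∀ x, φ (leafT x) = leafNd x)
    (P : W → W → List (Fin 9))
    (hP : ∀ e ∈ T.edges,
      (P e.1 e.2).Chain' (fun a b => (a, b) ∈ Nd.edges) ∧
      (P e.1 e.2).head? = some (φ e.1) ∧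
      (P e.1 e.2).getLast? = some (φ e.2) ∧
      2 ≤ (P e.1 e.2).length ∧
      (P e.1 e.2).Nodup ∧
      (∀ w ∈ Digraph'.internalVerts (P e.1 e.2), w ∉ Set.range φ) ∧
      ∀ e' ∈ T.edges, e ≠ e' →
        (∀ w ∈ Digraph'.internalVerts (P e.1 e.2), w ∉ Digraph'.internalVerts (P e'.1 e'.2)) ∧
        ∀ p ∈ Digraph'.pathEdges (P e.1 e.2), p ∉ Digraph'.pathEdges (P e'.1 e'.2))
    (hexcl : ∀ e ∈ T.edges, ex ∉ Digraph'.pathEdges (P e.1 e.2)) :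
    (∀ w : W, ¬(∃ x, leafT x = w) → T.outdeg w = 2 ∧ φ w ∈ S3) ∧
    Finset.image φ (Finset.univ.filter (fun w => ¬(∃ x, leafT x = w))) = S3 := by
  classical
  -- first edge of the path of a tree edge
  set Fe : W × W → Fin 9 × Fin 9 :=
    fun e => ((P e.1 e.2).headI, (P e.1 e.2).tail.headI) with hFedef
  have hFe : ∀ e ∈ T.edges, Fe e ∈ Digraph'.pathEdges (P e.1 e.2) ∧
      (Fe e).1 = φ e.1 ∧ Fe e ∈ Nd.edges ∧ Fe e ≠ ex := by
    intro e he
    obtain ⟨hc, hh, hl, hlen, hnd, hir, hdj⟩ := hP e he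
    rcases hpe : P e.1 e.2 with _ | ⟨a, _ | ⟨b, t⟩⟩
    · rw [hpe] at hlen; simp at hlen
    · rw [hpe] at hlen; simp at hlen
    · have hFeval : Fe e = (a, b) := by rw [hFedef]; simp [hpe]
      rw [hpe] at hh hc
      have hmem : (a, b) ∈ Digraph'.pathEdges (a::b::t) := by
        rw [pathEdges_cons_cons]; exact List.mem_cons_self
      have hNe : (a, b) ∈ Nd.edges := (chain'_iff_pathEdges _ _).mp hc _ hmem
      refine ⟨?_, ?_, ?_, ?_⟩
      · rw [hFeval]; exact hmem
      · rw [hFeval]; exact Option.some.inj hh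
      · rw [hFeval]; exact hNe
      · rw [hFeval]; intro hcon
        exact hexcl e he (by rw [hpe]; exact hcon ▸ hmem)
  -- degree bound and location of internal vertices
  have hout : ∀ w : W, ¬(∃ x, leafT x = w) → T.outdeg w = 2 ∧ φ w ∈ S3 := by
    intro w hw
    have h2le : 2 ≤ T.outdeg w := by
      by_cases hr : w = rootT
      · rw [hr]; exact hT.1.root_out
      · rcases hT.1.internal w hr hw with ⟨_, h⟩ | ⟨h, _⟩
        · exact h
        · exact absurd (le_trans h (hT.2 w)) (by norm_num)
    have hcard : T.outdeg w ≤ (Nd.edges.filter fun f => f.1 = φ w ∧ f ≠ ex).card := by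
      unfold Digraph'.outdeg
      apply Finset.card_le_card_of_injOn Fe
      · intro e hee
        obtain ⟨he, hfst⟩ := Finset.mem_filter.mp hee
        obtain ⟨_, h1, h2, h3⟩ := hFe e he
        exact Finset.mem_filter.mpr ⟨h2, by rw [h1, hfst], h3⟩
      · intro e hee e' hee' hFeq
        by_contra hne
        obtain ⟨he, _⟩ := Finset.mem_filter.mp hee
        obtain ⟨he', _⟩ := Finset.mem_filter.mp hee'
        have hdj := ((hP e he).2.2.2.2.2.2 e' he' hne).2
        exact hdj _ (hFe e he).1 (hFeq ▸ (hFe e' he').1)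
    exact ⟨le_antisymm (hcard.trans (hdeg _)) h2le, hmem3 _ (h2le.trans hcard)⟩
  -- counting
  have hin1 : ∀ w : W, w ≠ rootT → T.indeg w = 1 := by
    intro w hr
    by_cases hw : ∃ x, leafT x = w
    · exact ((hT.1.leaf_iff w).mp hw).1
    · rcases hT.1.internal w hr hw with ⟨h, _⟩ | ⟨h, _⟩
      · exact h
      · exact absurd (le_trans h (hT.2 w)) (by norm_num)
  have hsum_in : ∑ w, T.indeg w = T.edges.card := by
    unfold Digraph'.indeg
    exact (Finset.card_eq_sum_card_fiberwise (fun e _ => Finset.mem_univ e.2)).symm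
  have hsum_out : ∑ w, T.outdeg w = T.edges.card := by
    unfold Digraph'.outdeg
    exact (Finset.card_eq_sum_card_fiberwise (fun e _ => Finset.mem_univ e.1)).symm
  have hcardW : T.edges.card + 1 = Fintype.card W := by
    rw [← hsum_in]
    have h1 : ∑ w, T.indeg w = T.indeg rootT + ∑ w ∈ Finset.univ.erase rootT, T.indeg w :=
      (Finset.add_sum_erase _ _ (Finset.mem_univ rootT)).symm
    rw [h1, hT.1.root_in, zero_add]
    have h2 : ∑ w ∈ Finset.univ.erase rootT, T.indeg w
        = ∑ w ∈ Finset.univ.erase rootT, 1 :=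
      Finset.sum_congr rfl fun w hw => hin1 w (Finset.ne_of_mem_erase hw)
    rw [h2]
    simp only [Finset.sum_const, smul_eq_mul, mul_one,
      Finset.card_erase_of_mem (Finset.mem_univ rootT), Finset.card_univ]
    have : 0 < Fintype.card W := Fintype.card_pos_iff.mpr ⟨rootT⟩
    omega
  set I : Finset W := Finset.univ.filter (fun w => ¬(∃ x, leafT x = w)) with hI
  set L : Finset W := Finset.univ.filter (fun w => (∃ x, leafT x = w)) with hLdef
  have hLcard : L.card = 4 := by
    have : L = Finset.univ.image leafT := by
      ext w
      simp [hLdef, eq_comm]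
    rw [this, Finset.card_image_of_injective _ hT.1.leaf_inj]
    simp
  have hsplit : L.card + I.card = Fintype.card W := by
    rw [hLdef, hI, ← Finset.card_univ]
    exact Finset.card_filter_add_card_filter_not _
  have houtsum : ∑ w, T.outdeg w = 2 * I.card := by
    rw [← Finset.sum_filter_add_sum_filter_not Finset.univ (fun w => (∃ x, leafT x = w))]
    have hz : ∑ w ∈ L, T.outdeg w = 0 :=
      Finset.sum_eq_zero fun w hw =>
        ((hT.1.leaf_iff w).mp (Finset.mem_filter.mp hw).2).2
    have ht : ∑ w ∈ I, T.outdeg w = 2 * I.card := by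
      rw [Finset.sum_congr rfl fun w hw => (hout w (Finset.mem_filter.mp hw).2).1,
        Finset.sum_const, smul_eq_mul, mul_comm]
    rw [← hLdef, ← hI, hz, ht, zero_add]
  have hIcard : I.card = 3 := by
    have := hsum_out
    rw [houtsum] at this
    omega
  have himg : Finset.image φ I = S3 := by
    apply Finset.eq_of_subset_of_card_le
    · intro v hv
      obtain ⟨w, hw, rfl⟩ := Finset.mem_image.mp hv
      exact (hout w (Finset.mem_filter.mp hw).2).2
    · rw [Finset.card_image_of_injective _ hinj, hIcard, hS3]
  exact ⟨hout, himg⟩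
/-! ### tracing paths in Nd -/

def SA : Finset (Fin 9) := {0,1,3,5,6,7,8}
def SB : Finset (Fin 9) := {0,2,3,5,6,7,8}

lemma traceA (a b : Fin 9) (t : List (Fin 9)) (z : Fin 9)
    (ha : a = 0 ∨ a = 1 ∨ a = 3)
    (hc : (a::b::t).Chain' (fun u v => (u,v) ∈ Nd.edges))
    (hlast : (a::b::t).getLast? = some z)
    (hint : ∀ w ∈ Digraph'.internalVerts (a::b::t), w ∉ SA)
    (hexcl : ((2:Fin 9),(4:Fin 9)) ∉ Digraph'.pathEdges (a::b::t))
    (hz : z ∈ SA) :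
    (a = 0 ∧ ((b = 1 ∧ z = 1) ∨ (b = 3 ∧ z = 3))) ∨
    (a = 1 ∧ ((b = 5 ∧ z = 5) ∨ (b = 4 ∧ z = 6))) ∨
    (a = 3 ∧ ((b = 8 ∧ z = 8) ∨ (b = 2 ∧ z = 7))) := by
  have hab : (a,b) ∈ Nd.edges := (List.isChain_cons_cons.mp hc).1
  have hbmem : ∀ (c : Fin 9) (s : List (Fin 9)), t = c::s → b ∈ SA → False := by
    intro c s hts hbSA
    subst hts
    refine hint b ?_ hbSA
    rw [internalVerts_cons_cons, List.dropLast_cons₂]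
    exact List.mem_cons_self
  have hzt : t = [] → z = b := by
    intro h; subst h
    have := hlast.symm
    simpa using this
  rcases ha with rfl|rfl|rfl
  · -- a = 0
    have hb : b = 1 ∨ b = 3 := by
      have h : ∀ y : Fin 9, ((0:Fin 9), y) ∈ Nd.edges → y = 1 ∨ y = 3 := by decide
      exact h b hab
    left
    refine ⟨rfl, ?_⟩
    cases t with
    | nil =>
      have hzb := hzt rfl
      rcases hb with rfl|rfl
      · exact Or.inl ⟨rfl, hzb⟩
      · exact Or.inr ⟨rfl, hzb⟩
    | cons c s =>
      exfalso
      rcases hb with rfl|rfl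
      · exact hbmem c s rfl (by decide)
      · exact hbmem c s rfl (by decide)
  · -- a = 1
    have hb : b = 5 ∨ b = 4 := by
      have h : ∀ y : Fin 9, ((1:Fin 9), y) ∈ Nd.edges → y = 5 ∨ y = 4 := by decide
      exact h b hab
    right; left
    refine ⟨rfl, ?_⟩
    rcases hb with rfl|rfl
    · cases t with
      | nil => exact Or.inl ⟨rfl, hzt rfl⟩
      | cons c s =>
        exfalso
        have h5c : ((5:Fin 9), c) ∈ Nd.edges :=
          (List.isChain_cons_cons.mp (List.isChain_cons_cons.mp hc).2).1
        have h : ∀ y : Fin 9, ((5:Fin 9), y) ∉ Nd.edges := by decide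
        exact h c h5c
    · cases t with
      | nil =>
        exfalso
        have hz4 := hzt rfl
        rw [hz4] at hz
        exact absurd hz (by decide)
      | cons c s =>
        have h4c : ((4:Fin 9), c) ∈ Nd.edges :=
          (List.isChain_cons_cons.mp (List.isChain_cons_cons.mp hc).2).1
        have hc6 : c = 6 := by
          have h : ∀ y : Fin 9, ((4:Fin 9), y) ∈ Nd.edges → y = 6 := by decide
          exact h c h4c
        subst hc6
        cases s with
        | nil =>
          have hz6 : z = 6 := by
            have := hlast.symm
            simpa using this
          exact Or.inr ⟨rfl, hz6⟩
        | cons d s' =>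
          exfalso
          refine hint 6 ?_ (by decide)
          rw [internalVerts_cons_cons, List.dropLast_cons₂, List.dropLast_cons₂]
          exact List.mem_cons_of_mem _ (List.mem_cons_self)
  · -- a = 3
    have hb : b = 8 ∨ b = 2 := by
      have h : ∀ y : Fin 9, ((3:Fin 9), y) ∈ Nd.edges → y = 8 ∨ y = 2 := by decide
      exact h b hab
    right; right
    refine ⟨rfl, ?_⟩
    rcases hb with rfl|rfl
    · cases t with
      | nil => exact Or.inl ⟨rfl, hzt rfl⟩
      | cons c s =>
        exfalso
        have h8c : ((8:Fin 9), c) ∈ Nd.edges :=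
          (List.isChain_cons_cons.mp (List.isChain_cons_cons.mp hc).2).1
        have h : ∀ y : Fin 9, ((8:Fin 9), y) ∉ Nd.edges := by decide
        exact h c h8c
    · cases t with
      | nil =>
        exfalso
        have hz2 := hzt rfl
        rw [hz2] at hz
        exact absurd hz (by decide)
      | cons c s =>
        have h2c : ((2:Fin 9), c) ∈ Nd.edges :=
          (List.isChain_cons_cons.mp (List.isChain_cons_cons.mp hc).2).1
        have hc7 : c = 7 ∨ c = 4 := by
          have h : ∀ y : Fin 9, ((2:Fin 9), y) ∈ Nd.edges → y = 7 ∨ y = 4 := by decide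
          exact h c h2c
        rcases hc7 with rfl|rfl
        · cases s with
          | nil =>
            have hz7 : z = 7 := by
              have := hlast.symm
              simpa using this
            exact Or.inr ⟨rfl, hz7⟩
          | cons d s' =>
            exfalso
            refine hint 7 ?_ (by decide)
            rw [internalVerts_cons_cons, List.dropLast_cons₂, List.dropLast_cons₂]
            exact List.mem_cons_of_mem _ (List.mem_cons_self)
        · exfalso
          refine hexcl ?_
          rw [pathEdges_cons_cons, pathEdges_cons_cons]
          exact List.mem_cons_of_mem _ (List.mem_cons_self)

lemma traceB (a b : Fin 9) (t : List (Fin 9)) (z : Fin 9)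
    (ha : a = 0 ∨ a = 2 ∨ a = 3)
    (hc : (a::b::t).Chain' (fun u v => (u,v) ∈ Nd.edges))
    (hlast : (a::b::t).getLast? = some z)
    (hint : ∀ w ∈ Digraph'.internalVerts (a::b::t), w ∉ SB)
    (hexcl : ((1:Fin 9),(4:Fin 9)) ∉ Digraph'.pathEdges (a::b::t))
    (hz : z ∈ SB) :
    (a = 0 ∧ ((b = 1 ∧ z = 5) ∨ (b = 3 ∧ z = 3))) ∨
    (a = 2 ∧ ((b = 7 ∧ z = 7) ∨ (b = 4 ∧ z = 6))) ∨
    (a = 3 ∧ ((b = 8 ∧ z = 8) ∨ (b = 2 ∧ z = 2))) := by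
  have hab : (a,b) ∈ Nd.edges := (List.isChain_cons_cons.mp hc).1
  have hbmem : ∀ (c : Fin 9) (s : List (Fin 9)), t = c::s → b ∈ SB → False := by
    intro c s hts hbSB
    subst hts
    refine hint b ?_ hbSB
    rw [internalVerts_cons_cons, List.dropLast_cons₂]
    exact List.mem_cons_self
  have hzt : t = [] → z = b := by
    intro h; subst h
    have := hlast.symm
    simpa using this
  rcases ha with rfl|rfl|rfl
  · -- a = 0
    have hb : b = 1 ∨ b = 3 := by
      have h : ∀ y : Fin 9, ((0:Fin 9), y) ∈ Nd.edges → y = 1 ∨ y = 3 := by decide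
      exact h b hab
    left
    refine ⟨rfl, ?_⟩
    rcases hb with rfl|rfl
    · -- b = 1 : must continue through 1 to 5
      cases t with
      | nil =>
        exfalso
        have hz1 := hzt rfl
        rw [hz1] at hz
        exact absurd hz (by decide)
      | cons c s =>
        have h1c : ((1:Fin 9), c) ∈ Nd.edges :=
          (List.isChain_cons_cons.mp (List.isChain_cons_cons.mp hc).2).1
        have hc5 : c = 5 ∨ c = 4 := by
          have h : ∀ y : Fin 9, ((1:Fin 9), y) ∈ Nd.edges → y = 5 ∨ y = 4 := by decide
          exact h c h1c
        rcases hc5 with rfl|rfl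
        · cases s with
          | nil =>
            have hz5 : z = 5 := by
              have := hlast.symm
              simpa using this
            exact Or.inl ⟨rfl, hz5⟩
          | cons d s' =>
            exfalso
            refine hint 5 ?_ (by decide)
            rw [internalVerts_cons_cons, List.dropLast_cons₂, List.dropLast_cons₂]
            exact List.mem_cons_of_mem _ (List.mem_cons_self)
        · exfalso
          refine hexcl ?_
          rw [pathEdges_cons_cons, pathEdges_cons_cons]
          exact List.mem_cons_of_mem _ (List.mem_cons_self)
    · cases t with
      | nil => exact Or.inr ⟨rfl, hzt rfl⟩
      | cons c s => exact absurd (by decide : (3:Fin 9) ∈ SB) (fun h => hbmem c s rfl h)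
  · -- a = 2
    have hb : b = 7 ∨ b = 4 := by
      have h : ∀ y : Fin 9, ((2:Fin 9), y) ∈ Nd.edges → y = 7 ∨ y = 4 := by decide
      exact h b hab
    right; left
    refine ⟨rfl, ?_⟩
    rcases hb with rfl|rfl
    · cases t with
      | nil => exact Or.inl ⟨rfl, hzt rfl⟩
      | cons c s =>
        exfalso
        have h7c : ((7:Fin 9), c) ∈ Nd.edges :=
          (List.isChain_cons_cons.mp (List.isChain_cons_cons.mp hc).2).1
        have h : ∀ y : Fin 9, ((7:Fin 9), y) ∉ Nd.edges := by decide
        exact h c h7c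
    · cases t with
      | nil =>
        exfalso
        have hz4 := hzt rfl
        rw [hz4] at hz
        exact absurd hz (by decide)
      | cons c s =>
        have h4c : ((4:Fin 9), c) ∈ Nd.edges :=
          (List.isChain_cons_cons.mp (List.isChain_cons_cons.mp hc).2).1
        have hc6 : c = 6 := by
          have h : ∀ y : Fin 9, ((4:Fin 9), y) ∈ Nd.edges → y = 6 := by decide
          exact h c h4c
        subst hc6
        cases s with
        | nil =>
          have hz6 : z = 6 := by
            have := hlast.symm
            simpa using this
          exact Or.inr ⟨rfl, hz6⟩
        | cons d s' =>
          exfalso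
          refine hint 6 ?_ (by decide)
          rw [internalVerts_cons_cons, List.dropLast_cons₂, List.dropLast_cons₂]
          exact List.mem_cons_of_mem _ (List.mem_cons_self)
  · -- a = 3
    have hb : b = 8 ∨ b = 2 := by
      have h : ∀ y : Fin 9, ((3:Fin 9), y) ∈ Nd.edges → y = 8 ∨ y = 2 := by decide
      exact h b hab
    right; right
    refine ⟨rfl, ?_⟩
    rcases hb with rfl|rfl
    · cases t with
      | nil => exact Or.inl ⟨rfl, hzt rfl⟩
      | cons c s =>
        exfalso
        have h8c : ((8:Fin 9), c) ∈ Nd.edges :=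
          (List.isChain_cons_cons.mp (List.isChain_cons_cons.mp hc).2).1
        have h : ∀ y : Fin 9, ((8:Fin 9), y) ∉ Nd.edges := by decide
        exact h c h8c
    · cases t with
      | nil => exact Or.inr ⟨rfl, hzt rfl⟩
      | cons c s => exact absurd (by decide : (2:Fin 9) ∈ SB) (fun h => hbmem c s rfl h)
/-! ### case A: the switching uses (1,4); the displayed tree is T1 -/

lemma caseA {W : Type} [Fintype W] {T : Digraph' W} {rootT : W} {leafT : Fin 4 → W}
    (hT : Digraph'.IsPhyloTree T rootT leafT)
    (φ : W → Fin 9) (hinj : Function.Injective φ) (hleaf : ∀ x, φ (leafT x) = leafNd x)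
    (P : W → W → List (Fin 9))
    (hP : ∀ e ∈ T.edges,
      (P e.1 e.2).Chain' (fun a b => (a, b) ∈ Nd.edges) ∧
      (P e.1 e.2).head? = some (φ e.1) ∧
      (P e.1 e.2).getLast? = some (φ e.2) ∧
      2 ≤ (P e.1 e.2).length ∧
      (P e.1 e.2).Nodup ∧
      (∀ w ∈ Digraph'.internalVerts (P e.1 e.2), w ∉ Set.range φ) ∧
      ∀ e' ∈ T.edges, e ≠ e' →
        (∀ w ∈ Digraph'.internalVerts (P e.1 e.2), w ∉ Digraph'.internalVerts (P e'.1 e'.2)) ∧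
        ∀ p ∈ Digraph'.pathEdges (P e.1 e.2), p ∉ Digraph'.pathEdges (P e'.1 e'.2))
    (hexcl : ∀ e ∈ T.edges, ((2:Fin 9),(4:Fin 9)) ∉ Digraph'.pathEdges (P e.1 e.2)) :
    Digraph'.Iso T leafT T1 lf7 := by
  classical
  obtain ⟨hout, himg⟩ := display_structure (2,4) {0,1,3}
    (by decide) (by decide) (by decide) hT φ hinj hleaf P hP hexcl
  -- the three internal vertices
  obtain ⟨w0, hw0I, hφ0⟩ := Finset.mem_image.mp
    (himg ▸ (by decide : (0:Fin 9) ∈ ({0,1,3} : Finset (Fin 9))))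
  obtain ⟨w1, hw1I, hφ1⟩ := Finset.mem_image.mp
    (himg ▸ (by decide : (1:Fin 9) ∈ ({0,1,3} : Finset (Fin 9))))
  obtain ⟨w3, hw3I, hφ3⟩ := Finset.mem_image.mp
    (himg ▸ (by decide : (3:Fin 9) ∈ ({0,1,3} : Finset (Fin 9))))
  have hw0nl : ¬∃ x, leafT x = w0 := (Finset.mem_filter.mp hw0I).2
  have hw1nl : ¬∃ x, leafT x = w1 := (Finset.mem_filter.mp hw1I).2
  have hw3nl : ¬∃ x, leafT x = w3 := (Finset.mem_filter.mp hw3I).2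
  have hl0 : φ (leafT 0) = 5 := by rw [hleaf 0]; decide
  have hl1 : φ (leafT 1) = 6 := by rw [hleaf 1]; decide
  have hl2 : φ (leafT 2) = 7 := by rw [hleaf 2]; decide
  have hl3 : φ (leafT 3) = 8 := by rw [hleaf 3]; decide
  -- the range of φ is exactly SA
  have hrange : ∀ w : W, φ w ∈ SA := by
    intro w
    by_cases hw : ∃ x, leafT x = w
    · obtain ⟨x, rfl⟩ := hw
      rw [hleaf x]
      revert x; decide
    · have h3 := (hout w hw).2
      have h : ∀ v : Fin 9, v ∈ ({0,1,3} : Finset (Fin 9)) → v ∈ SA := by decide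
      exact h _ h3
  have hSAall : ∀ v : Fin 9, v ∈ SA → v = 0 ∨ v = 1 ∨ v = 3 ∨ v = 5 ∨ v = 6 ∨ v = 7 ∨ v = 8 := by
    decide
  have hSAr : ∀ v : Fin 9, v ∈ SA → ∃ u : W, φ u = v := by
    intro v hv
    rcases hSAall v hv with rfl|rfl|rfl|rfl|rfl|rfl|rfl
    exacts [⟨w0, hφ0⟩, ⟨w1, hφ1⟩, ⟨w3, hφ3⟩,
      ⟨leafT 0, hl0⟩, ⟨leafT 1, hl1⟩, ⟨leafT 2, hl2⟩, ⟨leafT 3, hl3⟩]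
  -- classification of the edges of T
  have hclass : ∀ e ∈ T.edges,
      (e.1 = w0 ∧ (e.2 = w1 ∨ e.2 = w3)) ∨
      (e.1 = w1 ∧ (e.2 = leafT 0 ∨ e.2 = leafT 1)) ∨
      (e.1 = w3 ∧ (e.2 = leafT 2 ∨ e.2 = leafT 3)) := by
    intro e he
    obtain ⟨hc, hh, hl, hlen, hnd, hir, hdj⟩ := hP e he
    have hnl : ¬∃ x, leafT x = e.1 := by
      rintro ⟨x, hx⟩
      have hzero := ((hT.1.leaf_iff e.1).mp ⟨x, hx⟩).2
      have hpos : 0 < T.outdeg e.1 := by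
        unfold Digraph'.outdeg
        exact Finset.card_pos.mpr ⟨e, Finset.mem_filter.mpr ⟨he, rfl⟩⟩
      omega
    have hφe1 : φ e.1 ∈ ({0,1,3} : Finset (Fin 9)) := (hout e.1 hnl).2
    rcases hpe : P e.1 e.2 with _ | ⟨a, _ | ⟨b, t⟩⟩
    · rw [hpe] at hlen; simp at hlen
    · rw [hpe] at hlen; simp at hlen
    rw [hpe] at hc hh hl hir
    have ha : a = φ e.1 := Option.some.inj hh
    have haS : a = 0 ∨ a = 1 ∨ a = 3 := by
      rw [ha]
      have h : ∀ v : Fin 9, v ∈ ({0,1,3} : Finset (Fin 9)) → v = 0 ∨ v = 1 ∨ v = 3 := by decide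
      exact h _ hφe1
    have hexcl' : ((2:Fin 9),(4:Fin 9)) ∉ Digraph'.pathEdges (a::b::t) := by
      rw [← hpe]; exact hexcl e he
    have hint' : ∀ w ∈ Digraph'.internalVerts (a::b::t), w ∉ SA := by
      intro w hw hwSA
      obtain ⟨u, hu⟩ := hSAr w hwSA
      exact hir w hw ⟨u, hu⟩
    have hres := traceA a b t (φ e.2) haS hc hl hint' hexcl' (hrange e.2)
    rcases hres with ⟨ha0, hbz⟩ | ⟨ha1, hbz⟩ | ⟨ha3, hbz⟩
    · left
      refine ⟨hinj (by rw [← ha, ha0, hφ0]), ?_⟩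
      rcases hbz with ⟨_, hz⟩ | ⟨_, hz⟩
      · exact Or.inl (hinj (by rw [hz, hφ1]))
      · exact Or.inr (hinj (by rw [hz, hφ3]))
    · right; left
      refine ⟨hinj (by rw [← ha, ha1, hφ1]), ?_⟩
      rcases hbz with ⟨_, hz⟩ | ⟨_, hz⟩
      · exact Or.inl (hinj (by rw [hz, hl0]))
      · exact Or.inr (hinj (by rw [hz, hl1]))
    · right; right
      refine ⟨hinj (by rw [← ha, ha3, hφ3]), ?_⟩
      rcases hbz with ⟨_, hz⟩ | ⟨_, hz⟩
      · exact Or.inr (hinj (by rw [hz, hl3]))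
      · exact Or.inl (hinj (by rw [hz, hl2]))
  -- distinctness
  have hdiff : ∀ (u v : W), φ u ≠ φ v → u ≠ v := fun u v h hc => h (congrArg φ hc)
  -- memberships of the six edges
  have hmemb : ∀ (w : W) (y y' : W), ¬(∃ x, leafT x = w) →
      (∀ e ∈ T.edges, e.1 = w → e.2 = y ∨ e.2 = y') →
      ((w, y) ∈ T.edges ∧ (w, y') ∈ T.edges) := by
    intro w y y' hwnl htar
    have h2 : T.outdeg w = 2 := (hout w hwnl).1
    unfold Digraph'.outdeg at h2
    obtain ⟨ea, hea, eb, heb, hne⟩ := Finset.one_lt_card.mp (h2.symm ▸ Nat.one_lt_two)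
    obtain ⟨heaE, hea1⟩ := Finset.mem_filter.mp hea
    obtain ⟨hebE, heb1⟩ := Finset.mem_filter.mp heb
    have hra := htar ea heaE hea1
    have hrb := htar eb hebE heb1
    have hpa : ea = (w, ea.2) := Prod.ext_iff.mpr ⟨hea1, rfl⟩
    have hpb : eb = (w, eb.2) := Prod.ext_iff.mpr ⟨heb1, rfl⟩
    rcases hra with h | h <;> rcases hrb with h' | h'
    · exact absurd (by rw [hpa, hpb, h, h']) hne
    · exact ⟨by rw [← h, ← hpa]; exact heaE, by rw [← h', ← hpb]; exact hebE⟩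
    · exact ⟨by rw [← h', ← hpb]; exact hebE, by rw [← h, ← hpa]; exact heaE⟩
    · exact absurd (by rw [hpa, hpb, h, h']) hne
  have hw0ne1 : w0 ≠ w1 := hdiff _ _ (by rw [hφ0, hφ1]; decide)
  have hw0ne3 : w0 ≠ w3 := hdiff _ _ (by rw [hφ0, hφ3]; decide)
  have hw1ne3 : w1 ≠ w3 := hdiff _ _ (by rw [hφ1, hφ3]; decide)
  have hm0 : (w0, w1) ∈ T.edges ∧ (w0, w3) ∈ T.edges := by
    apply hmemb w0 w1 w3 hw0nl
    intro e he h1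
    rcases hclass e he with ⟨_, h⟩ | ⟨hq, _⟩ | ⟨hq, _⟩
    · exact h
    · exact absurd (h1.symm.trans hq) hw0ne1
    · exact absurd (h1.symm.trans hq) hw0ne3
  have hm1 : (w1, leafT 0) ∈ T.edges ∧ (w1, leafT 1) ∈ T.edges := by
    apply hmemb w1 (leafT 0) (leafT 1) hw1nl
    intro e he h1
    rcases hclass e he with ⟨hq, _⟩ | ⟨_, h⟩ | ⟨hq, _⟩
    · exact absurd (h1.symm.trans hq) hw0ne1.symm
    · exact h
    · exact absurd (h1.symm.trans hq) hw1ne3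
  have hm3 : (w3, leafT 2) ∈ T.edges ∧ (w3, leafT 3) ∈ T.edges := by
    apply hmemb w3 (leafT 2) (leafT 3) hw3nl
    intro e he h1
    rcases hclass e he with ⟨hq, _⟩ | ⟨hq, _⟩ | ⟨_, h⟩
    · exact absurd (h1.symm.trans hq) hw0ne3.symm
    · exact absurd (h1.symm.trans hq) hw1ne3.symm
    · exact h
  -- totality
  have htot : ∀ w : W, w = w0 ∨ w = w1 ∨ w = w3 ∨
      w = leafT 0 ∨ w = leafT 1 ∨ w = leafT 2 ∨ w = leafT 3 := by
    intro w
    have hfin : ∀ x : Fin 4, x = 0 ∨ x = 1 ∨ x = 2 ∨ x = 3 := by decide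
    by_cases hw : ∃ x, leafT x = w
    · obtain ⟨x, rfl⟩ := hw
      rcases hfin x with rfl|rfl|rfl|rfl <;> tauto
    · have h3 := (hout w hw).2
      have h : φ w = 0 ∨ φ w = 1 ∨ φ w = 3 := by
        have hh : ∀ v : Fin 9, v ∈ ({0,1,3} : Finset (Fin 9)) → v = 0 ∨ v = 1 ∨ v = 3 := by decide
        exact hh _ h3
      rcases h with h|h|h
      · exact Or.inl (hinj (h.trans hφ0.symm))
      · exact Or.inr (Or.inl (hinj (h.trans hφ1.symm)))
      · exact Or.inr (Or.inr (Or.inl (hinj (h.trans hφ3.symm))))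
  -- the isomorphism
  set h9 : Fin 9 → Fin 7 := ![4, 5, 0, 6, 0, 0, 1, 2, 3] with h9def
  set g : W → Fin 7 := fun w => h9 (φ w) with hgdef
  set g' : Fin 7 → W := ![leafT 0, leafT 1, leafT 2, leafT 3, w0, w1, w3] with hg'def
  have hg0 : g w0 = 4 := by rw [hgdef]; simp only; rw [hφ0]; decide
  have hg1 : g w1 = 5 := by rw [hgdef]; simp only; rw [hφ1]; decide
  have hg3 : g w3 = 6 := by rw [hgdef]; simp only; rw [hφ3]; decide
  have hgl0 : g (leafT 0) = 0 := by rw [hgdef]; simp only; rw [hl0]; decide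
  have hgl1 : g (leafT 1) = 1 := by rw [hgdef]; simp only; rw [hl1]; decide
  have hgl2 : g (leafT 2) = 2 := by rw [hgdef]; simp only; rw [hl2]; decide
  have hgl3 : g (leafT 3) = 3 := by rw [hgdef]; simp only; rw [hl3]; decide
  have hli : Function.LeftInverse g' g := by
    intro w
    rcases htot w with rfl|rfl|rfl|rfl|rfl|rfl|rfl
    · rw [hg0]; rfl
    · rw [hg1]; rfl
    · rw [hg3]; rfl
    · rw [hgl0]; rfl
    · rw [hgl1]; rfl
    · rw [hgl2]; rfl
    · rw [hgl3]; rfl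
  have hri : Function.RightInverse g' g := by
    intro i
    fin_cases i
    · exact hgl0
    · exact hgl1
    · exact hgl2
    · exact hgl3
    · exact hg0
    · exact hg1
    · exact hg3
  set E : W ≃ Fin 7 := ⟨g, g', hli, hri⟩ with hEdef
  have hginj : Function.Injective g := hli.injective
  refine ⟨E, ?_, ?_⟩
  · intro u v
    constructor
    · intro huv
      show (g u, g v) ∈ T1.edges
      rcases hclass (u, v) huv with ⟨h1, h2⟩ | ⟨h1, h2⟩ | ⟨h1, h2⟩ <;>
        simp only at h1 h2 <;> rw [h1]
      · rcases h2 with h2|h2 <;> rw [h2]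
        · rw [hg0, hg1]; decide
        · rw [hg0, hg3]; decide
      · rcases h2 with h2|h2 <;> rw [h2]
        · rw [hg1, hgl0]; decide
        · rw [hg1, hgl1]; decide
      · rcases h2 with h2|h2 <;> rw [h2]
        · rw [hg3, hgl2]; decide
        · rw [hg3, hgl3]; decide
    · intro huv
      have huv' : (g u, g v) ∈ T1.edges := huv
      have hnol : ∀ (i y : Fin 7), i ≤ 3 → (i, y) ∉ T1.edges := by decide
      rcases htot u with hu|hu|hu|hu|hu|hu|hu <;> rw [hu] at huv' ⊢
      · rw [hg0] at huv'
        have h : ∀ y : Fin 7, ((4:Fin 7), y) ∈ T1.edges → y = 5 ∨ y = 6 := by decide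
        rcases h _ huv' with h'|h'
        · rw [hginj (h'.trans hg1.symm)]; exact hm0.1
        · rw [hginj (h'.trans hg3.symm)]; exact hm0.2
      · rw [hg1] at huv'
        have h : ∀ y : Fin 7, ((5:Fin 7), y) ∈ T1.edges → y = 0 ∨ y = 1 := by decide
        rcases h _ huv' with h'|h'
        · rw [hginj (h'.trans hgl0.symm)]; exact hm1.1
        · rw [hginj (h'.trans hgl1.symm)]; exact hm1.2
      · rw [hg3] at huv'
        have h : ∀ y : Fin 7, ((6:Fin 7), y) ∈ T1.edges → y = 2 ∨ y = 3 := by decide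
        rcases h _ huv' with h'|h'
        · rw [hginj (h'.trans hgl2.symm)]; exact hm3.1
        · rw [hginj (h'.trans hgl3.symm)]; exact hm3.2
      · rw [hgl0] at huv'
        exact absurd huv' (hnol 0 _ (by decide))
      · rw [hgl1] at huv'
        exact absurd huv' (hnol 1 _ (by decide))
      · rw [hgl2] at huv'
        exact absurd huv' (hnol 2 _ (by decide))
      · rw [hgl3] at huv'
        exact absurd huv' (hnol 3 _ (by decide))
  · intro x
    fin_cases x
    · exact hgl0
    · exact hgl1
    · exact hgl2
    · exact hgl3
/-! ### case B: the switching uses (2,4); the displayed tree is T2 -/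

lemma caseB {W : Type} [Fintype W] {T : Digraph' W} {rootT : W} {leafT : Fin 4 → W}
    (hT : Digraph'.IsPhyloTree T rootT leafT)
    (φ : W → Fin 9) (hinj : Function.Injective φ) (hleaf : ∀ x, φ (leafT x) = leafNd x)
    (P : W → W → List (Fin 9))
    (hP : ∀ e ∈ T.edges,
      (P e.1 e.2).Chain' (fun a b => (a, b) ∈ Nd.edges) ∧
      (P e.1 e.2).head? = some (φ e.1) ∧
      (P e.1 e.2).getLast? = some (φ e.2) ∧
      2 ≤ (P e.1 e.2).length ∧
      (P e.1 e.2).Nodup ∧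
      (∀ w ∈ Digraph'.internalVerts (P e.1 e.2), w ∉ Set.range φ) ∧
      ∀ e' ∈ T.edges, e ≠ e' →
        (∀ w ∈ Digraph'.internalVerts (P e.1 e.2), w ∉ Digraph'.internalVerts (P e'.1 e'.2)) ∧
        ∀ p ∈ Digraph'.pathEdges (P e.1 e.2), p ∉ Digraph'.pathEdges (P e'.1 e'.2))
    (hexcl : ∀ e ∈ T.edges, ((1:Fin 9),(4:Fin 9)) ∉ Digraph'.pathEdges (P e.1 e.2)) :
    Digraph'.Iso T leafT T2 lf7 := by
  classical
  obtain ⟨hout, himg⟩ := display_structure (1,4) {0,2,3}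
    (by decide) (by decide) (by decide) hT φ hinj hleaf P hP hexcl
  -- the three internal vertices
  obtain ⟨w0, hw0I, hφ0⟩ := Finset.mem_image.mp
    (himg ▸ (by decide : (0:Fin 9) ∈ ({0,2,3} : Finset (Fin 9))))
  obtain ⟨w2, hw2I, hφ2⟩ := Finset.mem_image.mp
    (himg ▸ (by decide : (2:Fin 9) ∈ ({0,2,3} : Finset (Fin 9))))
  obtain ⟨w3, hw3I, hφ3⟩ := Finset.mem_image.mp
    (himg ▸ (by decide : (3:Fin 9) ∈ ({0,2,3} : Finset (Fin 9))))
  have hw0nl : ¬∃ x, leafT x = w0 := (Finset.mem_filter.mp hw0I).2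
  have hw2nl : ¬∃ x, leafT x = w2 := (Finset.mem_filter.mp hw2I).2
  have hw3nl : ¬∃ x, leafT x = w3 := (Finset.mem_filter.mp hw3I).2
  have hl0 : φ (leafT 0) = 5 := by rw [hleaf 0]; decide
  have hl1 : φ (leafT 1) = 6 := by rw [hleaf 1]; decide
  have hl2 : φ (leafT 2) = 7 := by rw [hleaf 2]; decide
  have hl3 : φ (leafT 3) = 8 := by rw [hleaf 3]; decide
  -- the range of φ is exactly SB
  have hrange : ∀ w : W, φ w ∈ SB := by
    intro w
    by_cases hw : ∃ x, leafT x = w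
    · obtain ⟨x, rfl⟩ := hw
      rw [hleaf x]
      revert x; decide
    · have h3 := (hout w hw).2
      have h : ∀ v : Fin 9, v ∈ ({0,2,3} : Finset (Fin 9)) → v ∈ SB := by decide
      exact h _ h3
  have hSBall : ∀ v : Fin 9, v ∈ SB → v = 0 ∨ v = 2 ∨ v = 3 ∨ v = 5 ∨ v = 6 ∨ v = 7 ∨ v = 8 := by
    decide
  have hSBr : ∀ v : Fin 9, v ∈ SB → ∃ u : W, φ u = v := by
    intro v hv
    rcases hSBall v hv with rfl|rfl|rfl|rfl|rfl|rfl|rfl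
    exacts [⟨w0, hφ0⟩, ⟨w2, hφ2⟩, ⟨w3, hφ3⟩,
      ⟨leafT 0, hl0⟩, ⟨leafT 1, hl1⟩, ⟨leafT 2, hl2⟩, ⟨leafT 3, hl3⟩]
  -- classification of the edges of T
  have hclass : ∀ e ∈ T.edges,
      (e.1 = w0 ∧ (e.2 = leafT 0 ∨ e.2 = w3)) ∨
      (e.1 = w2 ∧ (e.2 = leafT 1 ∨ e.2 = leafT 2)) ∨
      (e.1 = w3 ∧ (e.2 = w2 ∨ e.2 = leafT 3)) := by
    intro e he
    obtain ⟨hc, hh, hl, hlen, hnd, hir, hdj⟩ := hP e he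
    have hnl : ¬∃ x, leafT x = e.1 := by
      rintro ⟨x, hx⟩
      have hzero := ((hT.1.leaf_iff e.1).mp ⟨x, hx⟩).2
      have hpos : 0 < T.outdeg e.1 := by
        unfold Digraph'.outdeg
        exact Finset.card_pos.mpr ⟨e, Finset.mem_filter.mpr ⟨he, rfl⟩⟩
      omega
    have hφe1 : φ e.1 ∈ ({0,2,3} : Finset (Fin 9)) := (hout e.1 hnl).2
    rcases hpe : P e.1 e.2 with _ | ⟨a, _ | ⟨b, t⟩⟩
    · rw [hpe] at hlen; simp at hlen
    · rw [hpe] at hlen; simp at hlen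
    rw [hpe] at hc hh hl hir
    have ha : a = φ e.1 := Option.some.inj hh
    have haS : a = 0 ∨ a = 2 ∨ a = 3 := by
      rw [ha]
      have h : ∀ v : Fin 9, v ∈ ({0,2,3} : Finset (Fin 9)) → v = 0 ∨ v = 2 ∨ v = 3 := by decide
      exact h _ hφe1
    have hexcl' : ((1:Fin 9),(4:Fin 9)) ∉ Digraph'.pathEdges (a::b::t) := by
      rw [← hpe]; exact hexcl e he
    have hint' : ∀ w ∈ Digraph'.internalVerts (a::b::t), w ∉ SB := by
      intro w hw hwSB
      obtain ⟨u, hu⟩ := hSBr w hwSB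
      exact hir w hw ⟨u, hu⟩
    have hres := traceB a b t (φ e.2) haS hc hl hint' hexcl' (hrange e.2)
    rcases hres with ⟨ha0, hbz⟩ | ⟨ha1, hbz⟩ | ⟨ha3, hbz⟩
    · left
      refine ⟨hinj (by rw [← ha, ha0, hφ0]), ?_⟩
      rcases hbz with ⟨_, hz⟩ | ⟨_, hz⟩
      · exact Or.inl (hinj (by rw [hz, hl0]))
      · exact Or.inr (hinj (by rw [hz, hφ3]))
    · right; left
      refine ⟨hinj (by rw [← ha, ha1, hφ2]), ?_⟩
      rcases hbz with ⟨_, hz⟩ | ⟨_, hz⟩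
      · exact Or.inr (hinj (by rw [hz, hl2]))
      · exact Or.inl (hinj (by rw [hz, hl1]))
    · right; right
      refine ⟨hinj (by rw [← ha, ha3, hφ3]), ?_⟩
      rcases hbz with ⟨_, hz⟩ | ⟨_, hz⟩
      · exact Or.inr (hinj (by rw [hz, hl3]))
      · exact Or.inl (hinj (by rw [hz, hφ2]))
  -- distinctness
  have hdiff : ∀ (u v : W), φ u ≠ φ v → u ≠ v := fun u v h hc => h (congrArg φ hc)
  -- memberships of the six edges
  have hmemb : ∀ (w : W) (y y' : W), ¬(∃ x, leafT x = w) →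
      (∀ e ∈ T.edges, e.1 = w → e.2 = y ∨ e.2 = y') →
      ((w, y) ∈ T.edges ∧ (w, y') ∈ T.edges) := by
    intro w y y' hwnl htar
    have h2 : T.outdeg w = 2 := (hout w hwnl).1
    unfold Digraph'.outdeg at h2
    obtain ⟨ea, hea, eb, heb, hne⟩ := Finset.one_lt_card.mp (h2.symm ▸ Nat.one_lt_two)
    obtain ⟨heaE, hea1⟩ := Finset.mem_filter.mp hea
    obtain ⟨hebE, heb1⟩ := Finset.mem_filter.mp heb
    have hra := htar ea heaE hea1
    have hrb := htar eb hebE heb1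
    have hpa : ea = (w, ea.2) := Prod.ext_iff.mpr ⟨hea1, rfl⟩
    have hpb : eb = (w, eb.2) := Prod.ext_iff.mpr ⟨heb1, rfl⟩
    rcases hra with h | h <;> rcases hrb with h' | h'
    · exact absurd (by rw [hpa, hpb, h, h']) hne
    · exact ⟨by rw [← h, ← hpa]; exact heaE, by rw [← h', ← hpb]; exact hebE⟩
    · exact ⟨by rw [← h', ← hpb]; exact hebE, by rw [← h, ← hpa]; exact heaE⟩
    · exact absurd (by rw [hpa, hpb, h, h']) hne
  have hw0ne1 : w0 ≠ w2 := hdiff _ _ (by rw [hφ0, hφ2]; decide)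
  have hw0ne3 : w0 ≠ w3 := hdiff _ _ (by rw [hφ0, hφ3]; decide)
  have hw2ne3 : w2 ≠ w3 := hdiff _ _ (by rw [hφ2, hφ3]; decide)
  have hm0 : (w0, leafT 0) ∈ T.edges ∧ (w0, w3) ∈ T.edges := by
    apply hmemb w0 (leafT 0) w3 hw0nl
    intro e he h1
    rcases hclass e he with ⟨_, h⟩ | ⟨hq, _⟩ | ⟨hq, _⟩
    · exact h
    · exact absurd (h1.symm.trans hq) hw0ne1
    · exact absurd (h1.symm.trans hq) hw0ne3
  have hm1 : (w2, leafT 1) ∈ T.edges ∧ (w2, leafT 2) ∈ T.edges := by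
    apply hmemb w2 (leafT 1) (leafT 2) hw2nl
    intro e he h1
    rcases hclass e he with ⟨hq, _⟩ | ⟨_, h⟩ | ⟨hq, _⟩
    · exact absurd (h1.symm.trans hq) hw0ne1.symm
    · exact h
    · exact absurd (h1.symm.trans hq) hw2ne3
  have hm3 : (w3, w2) ∈ T.edges ∧ (w3, leafT 3) ∈ T.edges := by
    apply hmemb w3 w2 (leafT 3) hw3nl
    intro e he h1
    rcases hclass e he with ⟨hq, _⟩ | ⟨hq, _⟩ | ⟨_, h⟩
    · exact absurd (h1.symm.trans hq) hw0ne3.symm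
    · exact absurd (h1.symm.trans hq) hw2ne3.symm
    · exact h
  -- totality
  have htot : ∀ w : W, w = w0 ∨ w = w2 ∨ w = w3 ∨
      w = leafT 0 ∨ w = leafT 1 ∨ w = leafT 2 ∨ w = leafT 3 := by
    intro w
    have hfin : ∀ x : Fin 4, x = 0 ∨ x = 1 ∨ x = 2 ∨ x = 3 := by decide
    by_cases hw : ∃ x, leafT x = w
    · obtain ⟨x, rfl⟩ := hw
      rcases hfin x with rfl|rfl|rfl|rfl <;> tauto
    · have h3 := (hout w hw).2
      have h : φ w = 0 ∨ φ w = 2 ∨ φ w = 3 := by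
        have hh : ∀ v : Fin 9, v ∈ ({0,2,3} : Finset (Fin 9)) → v = 0 ∨ v = 2 ∨ v = 3 := by decide
        exact hh _ h3
      rcases h with h|h|h
      · exact Or.inl (hinj (h.trans hφ0.symm))
      · exact Or.inr (Or.inl (hinj (h.trans hφ2.symm)))
      · exact Or.inr (Or.inr (Or.inl (hinj (h.trans hφ3.symm))))
  -- the isomorphism
  set h9 : Fin 9 → Fin 7 := ![4, 0, 6, 5, 0, 0, 1, 2, 3] with h9def
  set g : W → Fin 7 := fun w => h9 (φ w) with hgdef
  set g' : Fin 7 → W := ![leafT 0, leafT 1, leafT 2, leafT 3, w0, w3, w2] with hg'def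
  have hg0 : g w0 = 4 := by rw [hgdef]; simp only; rw [hφ0]; decide
  have hg1 : g w2 = 6 := by rw [hgdef]; simp only; rw [hφ2]; decide
  have hg3 : g w3 = 5 := by rw [hgdef]; simp only; rw [hφ3]; decide
  have hgl0 : g (leafT 0) = 0 := by rw [hgdef]; simp only; rw [hl0]; decide
  have hgl1 : g (leafT 1) = 1 := by rw [hgdef]; simp only; rw [hl1]; decide
  have hgl2 : g (leafT 2) = 2 := by rw [hgdef]; simp only; rw [hl2]; decide
  have hgl3 : g (leafT 3) = 3 := by rw [hgdef]; simp only; rw [hl3]; decide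
  have hli : Function.LeftInverse g' g := by
    intro w
    rcases htot w with rfl|rfl|rfl|rfl|rfl|rfl|rfl
    · rw [hg0]; rfl
    · rw [hg1]; rfl
    · rw [hg3]; rfl
    · rw [hgl0]; rfl
    · rw [hgl1]; rfl
    · rw [hgl2]; rfl
    · rw [hgl3]; rfl
  have hri : Function.RightInverse g' g := by
    intro i
    fin_cases i
    · exact hgl0
    · exact hgl1
    · exact hgl2
    · exact hgl3
    · exact hg0
    · exact hg3
    · exact hg1
  set E : W ≃ Fin 7 := ⟨g, g', hli, hri⟩ with hEdef
  have hginj : Function.Injective g := hli.injective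
  refine ⟨E, ?_, ?_⟩
  · intro u v
    constructor
    · intro huv
      show (g u, g v) ∈ T2.edges
      rcases hclass (u, v) huv with ⟨h1, h2⟩ | ⟨h1, h2⟩ | ⟨h1, h2⟩ <;>
        simp only at h1 h2 <;> rw [h1]
      · rcases h2 with h2|h2 <;> rw [h2]
        · rw [hg0, hgl0]; decide
        · rw [hg0, hg3]; decide
      · rcases h2 with h2|h2 <;> rw [h2]
        · rw [hg1, hgl1]; decide
        · rw [hg1, hgl2]; decide
      · rcases h2 with h2|h2 <;> rw [h2]
        · rw [hg3, hg1]; decide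
        · rw [hg3, hgl3]; decide
    · intro huv
      have huv' : (g u, g v) ∈ T2.edges := huv
      have hnol : ∀ (i y : Fin 7), i ≤ 3 → (i, y) ∉ T2.edges := by decide
      rcases htot u with hu|hu|hu|hu|hu|hu|hu <;> rw [hu] at huv' ⊢
      · rw [hg0] at huv'
        have h : ∀ y : Fin 7, ((4:Fin 7), y) ∈ T2.edges → y = 0 ∨ y = 5 := by decide
        rcases h _ huv' with h'|h'
        · rw [hginj (h'.trans hgl0.symm)]; exact hm0.1
        · rw [hginj (h'.trans hg3.symm)]; exact hm0.2
      · rw [hg1] at huv'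
        have h : ∀ y : Fin 7, ((6:Fin 7), y) ∈ T2.edges → y = 1 ∨ y = 2 := by decide
        rcases h _ huv' with h'|h'
        · rw [hginj (h'.trans hgl1.symm)]; exact hm1.1
        · rw [hginj (h'.trans hgl2.symm)]; exact hm1.2
      · rw [hg3] at huv'
        have h : ∀ y : Fin 7, ((5:Fin 7), y) ∈ T2.edges → y = 6 ∨ y = 3 := by decide
        rcases h _ huv' with h'|h'
        · rw [hginj (h'.trans hg1.symm)]; exact hm3.1
        · rw [hginj (h'.trans hgl3.symm)]; exact hm3.2
      · rw [hgl0] at huv'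
        exact absurd huv' (hnol 0 _ (by decide))
      · rw [hgl1] at huv'
        exact absurd huv' (hnol 1 _ (by decide))
      · rw [hgl2] at huv'
        exact absurd huv' (hnol 2 _ (by decide))
      · rw [hgl3] at huv'
        exact absurd huv' (hnol 3 _ (by decide))
  · intro x
    fin_cases x
    · exact hgl0
    · exact hgl1
    · exact hgl2
    · exact hgl3
/-! ### classification of displayed trees -/

lemma classify : ∀ (W : Type) (T : Digraph' W) (rootT : W) (leafT : Fin 4 → W),
    Digraph'.IsPhyloTree T rootT leafT → Digraph'.Displays Nd leafNd T leafT →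
    Digraph'.Iso T leafT T1 lf7 ∨ Digraph'.Iso T leafT T2 lf7 := by
  intro W T rootT leafT hT hD
  obtain ⟨φ, hinj, hleaf, P, hP⟩ := hD
  haveI : Finite W := Finite.of_injective φ hinj
  haveI : Fintype W := Fintype.ofFinite W
  have hnotboth : ∀ e ∈ T.edges, ∀ e' ∈ T.edges,
      ((1:Fin 9),(4:Fin 9)) ∈ Digraph'.pathEdges (P e.1 e.2) →
      ((2:Fin 9),(4:Fin 9)) ∈ Digraph'.pathEdges (P e'.1 e'.2) → False := by
    intro e he e' he' h14 h24
    by_cases heq : e = e'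
    · subst heq
      exact absurd (pred_unique (hP e he).2.2.2.2.1 h14 h24) (by decide)
    · have hd := (hP e he).2.2.2.2.2.2 e' he' heq
      have hir := (hP e he).2.2.2.2.2.1
      have hir' := (hP e' he').2.2.2.2.2.1
      have hl := (hP e he).2.2.1
      have hl' := (hP e' he').2.2.1
      rcases snd_pathEdges_cases h14 with hi | hlst
      · rcases snd_pathEdges_cases h24 with hi' | hlst'
        · exact hd.1 4 hi hi'
        · have h4 : φ e'.2 = 4 := Option.some.inj (hl'.symm.trans hlst')
          exact hir 4 hi ⟨e'.2, h4⟩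
      · rcases snd_pathEdges_cases h24 with hi' | hlst'
        · have h4 : φ e.2 = 4 := Option.some.inj (hl.symm.trans hlst)
          exact hir' 4 hi' ⟨e.2, h4⟩
        · have h4 : φ e.2 = 4 := Option.some.inj (hl.symm.trans hlst)
          have h4' : φ e'.2 = 4 := Option.some.inj (hl'.symm.trans hlst')
          have h22' : e.2 = e'.2 := hinj (h4.trans h4'.symm)
          have hcard := hT.2 e.2
          unfold Digraph'.indeg at hcard
          exact heq (Finset.card_le_one.mp hcard e (Finset.mem_filter.mpr ⟨he, rfl⟩)
            e' (Finset.mem_filter.mpr ⟨he', h22'.symm⟩))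
  by_cases hcase : ∃ e ∈ T.edges, ((2:Fin 9),(4:Fin 9)) ∈ Digraph'.pathEdges (P e.1 e.2)
  · right
    apply caseB hT φ hinj hleaf P hP
    intro e he h14
    obtain ⟨e', he', h24⟩ := hcase
    exact hnotboth e he e' he' h14 h24
  · left
    apply caseA hT φ hinj hleaf P hP
    intro e he h24
    exact hcase ⟨e, he, h24⟩

/-! ### the main theorem -/

theorem stmt15' :
    ∃ (V W₁ W₂ : Type) (N : Digraph' V) (rootN : V) (leafN : Fin 4 → V)
      (T₁ : Digraph' W₁) (rootT₁ : W₁) (leafT₁ : Fin 4 → W₁)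
      (T₂ : Digraph' W₂) (rootT₂ : W₂) (leafT₂ : Fin 4 → W₂)
      (χ : Fin 4 → Bool),
      Digraph'.IsPhyloNetwork N rootN leafN ∧
      (∃! v : V, 2 ≤ N.indeg v) ∧
      Digraph'.IsPhyloTree T₁ rootT₁ leafT₁ ∧ Digraph'.IsPhyloTree T₂ rootT₂ leafT₂ ∧
      Digraph'.Displays N leafN T₁ leafT₁ ∧ Digraph'.Displays N leafN T₂ leafT₂ ∧
      ¬ Digraph'.Iso T₁ leafT₁ T₂ leafT₂ ∧
      (∀ (W : Type) (T : Digraph' W) (rootT : W) (leafT : Fin 4 → W),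
        Digraph'.IsPhyloTree T rootT leafT → Digraph'.Displays N leafN T leafT →
        Digraph'.Iso T leafT T₁ leafT₁ ∨ Digraph'.Iso T leafT T₂ leafT₂) ∧
      Digraph'.psHard T₁ leafT₁ χ = 1 ∧ Digraph'.psHard T₂ leafT₂ χ = 2 ∧
      Digraph'.psSoft N leafN χ = 1 ∧
      max ((1 / 4 : ℝ) * 2 ^ (-(Digraph'.psHard T₁ leafT₁ χ : ℤ) - 1))
          ((3 / 4 : ℝ) * 2 ^ (-(Digraph'.psHard T₂ leafT₂ χ : ℤ) - 1)) = 3 / 32 ∧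
      (3 / 32 : ℝ) ≠ 2 ^ (-(Digraph'.psSoft N leafN χ : ℤ) - 1) ∧
      (1 / 4 : ℝ) * 2 ^ (-(Digraph'.psHard T₁ leafT₁ χ : ℤ) - 1) <
        (3 / 4 : ℝ) * 2 ^ (-(Digraph'.psHard T₂ leafT₂ χ : ℤ) - 1) := by
  refine ⟨Fin 9, Fin 7, Fin 7, Nd, 0, leafNd, T1, 4, lf7, T2, 4, lf7, chi,
    hNnet, hretic, hT1tree, hT2tree, hDisp1, hDisp2, hNotIso, classify,
    hps1, hps2, hpsSoft, ?_, ?_, ?_⟩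
  · rw [hps1, hps2]
    norm_num
  · rw [hpsSoft]
    norm_num
  · rw [hps1, hps2]
    norm_num

/-- a counterexample showing weighted softwired ML is not
    equivalent to softwired MP. -/
theorem stmt15 :
    ∃ (V W₁ W₂ : Type) (N : Digraph' V) (rootN : V) (leafN : Fin 4 → V)
      (T₁ : Digraph' W₁) (rootT₁ : W₁) (leafT₁ : Fin 4 → W₁)
      (T₂ : Digraph' W₂) (rootT₂ : W₂) (leafT₂ : Fin 4 → W₂)
      (χ : Fin 4 → Bool),
      IsPhyloNetwork N rootN leafN ∧
      (∃! v : V, 2 ≤ N.indeg v) ∧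
      IsPhyloTree T₁ rootT₁ leafT₁ ∧ IsPhyloTree T₂ rootT₂ leafT₂ ∧
      Displays N leafN T₁ leafT₁ ∧ Displays N leafN T₂ leafT₂ ∧
      ¬ Iso T₁ leafT₁ T₂ leafT₂ ∧
      (∀ (W : Type) (T : Digraph' W) (rootT : W) (leafT : Fin 4 → W),
        IsPhyloTree T rootT leafT → Displays N leafN T leafT →
        Iso T leafT T₁ leafT₁ ∨ Iso T leafT T₂ leafT₂) ∧
      psHard T₁ leafT₁ χ = 1 ∧ psHard T₂ leafT₂ χ = 2 ∧ psSoft N leafN χ = 1 ∧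
      max ((1 / 4 : ℝ) * 2 ^ (-(psHard T₁ leafT₁ χ : ℤ) - 1))
          ((3 / 4 : ℝ) * 2 ^ (-(psHard T₂ leafT₂ χ : ℤ) - 1)) = 3 / 32 ∧
      (3 / 32 : ℝ) ≠ 2 ^ (-(psSoft N leafN χ : ℤ) - 1) ∧
      (1 / 4 : ℝ) * 2 ^ (-(psHard T₁ leafT₁ χ : ℤ) - 1) <
        (3 / 4 : ℝ) * 2 ^ (-(psHard T₂ leafT₂ χ : ℤ) - 1) := by
  exact stmt15'
end

section
/- If all trees displayed by a rooted phylogenetic network N are assigned the uniform probability P(T|N,χ) = 1/|D(N)| under the N_r-model with no common mechanism, then (assuming the Tuffley–Steel identity max P(χ|T) = r^{−PS(χ,T)−1} for trees) the weighted softwired maximum likelihood satisfies max P_{w-soft}(χ | N) = (1/|D(N)|)·r^{−PS_soft(χ,N)−1}; in particular, for networks with the same number of displayed trees, weighted softwired ML and softwired MP induce the same ranking. -/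
open scoped Classical

open Digraph'

lemma ch_iso {W W' C : Type} (T : Digraph' W) (T' : Digraph' W') (g : W ≃ W')
    (hg : ∀ u v : W, (u, v) ∈ T.edges ↔ (g u, g v) ∈ T'.edges) (f : W → C) :
    ch T f = ch T' (f ∘ g.symm) := by
  classical
  unfold ch
  apply Finset.card_bij (fun e _ => (g e.1, g e.2))
  · intro e he
    simp only [Finset.mem_filter] at he ⊢
    refine ⟨(hg e.1 e.2).1 he.1, ?_⟩
    simpa using he.2
  · intro a ha b hb hab
    simp only [Prod.mk.injEq] at hab
    exact Prod.ext (g.injective hab.1) (g.injective hab.2)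
  · intro e' he'
    simp only [Finset.mem_filter] at he'
    refine ⟨(g.symm e'.1, g.symm e'.2), ?_, ?_⟩
    · simp only [Finset.mem_filter]
      constructor
      · have := (hg (g.symm e'.1) (g.symm e'.2)).2
        simp only [Equiv.apply_symm_apply] at this
        exact this he'.1
      · simpa using he'.2
    · simp

lemma psHard_iso {W W' X C : Type} (T : Digraph' W) (leafT : X → W)
    (T' : Digraph' W') (leafT' : X → W') (h : Iso T leafT T' leafT') (χ : X → C) :
    psHard T leafT χ = psHard T' leafT' χ := by
  obtain ⟨g, hg, hleaf⟩ := h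
  unfold psHard
  congr 1
  ext n
  constructor
  · rintro ⟨f, hf, rfl⟩
    refine ⟨f ∘ g.symm, ?_, (ch_iso T T' g hg f).symm⟩
    intro x
    simp [Function.comp, ← hleaf x, hf x]
  · rintro ⟨f, hf, rfl⟩
    refine ⟨f ∘ g, ?_, ?_⟩
    · intro x
      simp [Function.comp, hleaf x, hf x]
    · have := ch_iso T T' g hg (f ∘ g)
      simp only [this]
      congr 1
      ext v
      simp
      
lemma psSoft_eq_inf' {V X C : Type} {m : ℕ} (hm : 0 < m)
    (N : Digraph' V) (leafN : X → V) (χ : X → C)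
    (W : Type) (Ts : Fin m → Digraph' W) (roots : Fin m → W) (leafs : Fin m → X → W)
    (hTs : ∀ i, IsPhyloTree (Ts i) (roots i) (leafs i) ∧ Displays N leafN (Ts i) (leafs i))
    (hcover : ∀ (W₀ : Type) (T₀ : Digraph' W₀) (rootT₀ : W₀) (leafT₀ : X → W₀),
      IsPhyloTree T₀ rootT₀ leafT₀ → Displays N leafN T₀ leafT₀ →
      ∃ i, Iso T₀ leafT₀ (Ts i) (leafs i)) :
    psSoft N leafN χ = Finset.univ.inf' (Finset.univ_nonempty_iff.mpr ⟨⟨0, hm⟩⟩)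
      (fun i => psHard (Ts i) (leafs i) χ) := by
  have hrange : {n | ∃ (W₀ : Type) (T : Digraph' W₀) (rootT : W₀) (leafT : X → W₀),
      IsPhyloTree T rootT leafT ∧ Displays N leafN T leafT ∧ psHard T leafT χ = n} =
      Set.range (fun i => psHard (Ts i) (leafs i) χ) := by
    ext n
    constructor
    · rintro ⟨W₀, T₀, root₀, leaf₀, h1, h2, rfl⟩
      obtain ⟨i, hiso⟩ := hcover W₀ T₀ root₀ leaf₀ h1 h2
      exact ⟨i, (psHard_iso T₀ leaf₀ (Ts i) (leafs i) hiso χ).symm⟩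
    · rintro ⟨i, rfl⟩
      exact ⟨W, Ts i, roots i, leafs i, (hTs i).1, (hTs i).2, rfl⟩
  unfold psSoft
  rw [hrange]
  apply le_antisymm
  · obtain ⟨i₀, _, h₀⟩ := Finset.exists_mem_eq_inf' (Finset.univ_nonempty_iff.mpr ⟨⟨0, hm⟩⟩)
      (fun i => psHard (Ts i) (leafs i) χ)
    rw [h₀]
    exact Nat.sInf_le ⟨i₀, rfl⟩
  · refine le_csInf ⟨_, ⟨⟨0, hm⟩, rfl⟩⟩ ?_
    rintro n ⟨i, rfl⟩
    exact Finset.inf'_le _ (Finset.mem_univ i)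

/-- with uniform weights on the displayed trees, the weighted
    softwired ML equals (1/|D(N)|)·r^(−PS_soft−1); in particular, networks with
    equally many displayed trees are ranked identically by weighted softwired ML
    and softwired MP. -/
theorem stmt16 {V V' X C : Type} (r : ℕ) (hr : 2 ≤ r) {m : ℕ} (hm : 0 < m)
    (N : Digraph' V) (rootN : V) (leafN : X → V) (hN : IsPhyloNetwork N rootN leafN)
    (N' : Digraph' V') (rootN' : V') (leafN' : X → V')
    (hN' : IsPhyloNetwork N' rootN' leafN') (χ : X → C)
    (W : Type) (Ts : Fin m → Digraph' W) (roots : Fin m → W) (leafs : Fin m → X → W)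
    (hTs : ∀ i, IsPhyloTree (Ts i) (roots i) (leafs i) ∧ Displays N leafN (Ts i) (leafs i))
    (hcover : ∀ (W₀ : Type) (T₀ : Digraph' W₀) (rootT₀ : W₀) (leafT₀ : X → W₀),
      IsPhyloTree T₀ rootT₀ leafT₀ → Displays N leafN T₀ leafT₀ →
      ∃ i, Iso T₀ leafT₀ (Ts i) (leafs i))
    (hdistinct : ∀ i j, i ≠ j → ¬ Iso (Ts i) (leafs i) (Ts j) (leafs j))
    (W' : Type) (Ts' : Fin m → Digraph' W') (roots' : Fin m → W') (leafs' : Fin m → X → W')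
    (hTs' : ∀ i, IsPhyloTree (Ts' i) (roots' i) (leafs' i) ∧
      Displays N' leafN' (Ts' i) (leafs' i))
    (hcover' : ∀ (W₀ : Type) (T₀ : Digraph' W₀) (rootT₀ : W₀) (leafT₀ : X → W₀),
      IsPhyloTree T₀ rootT₀ leafT₀ → Displays N' leafN' T₀ leafT₀ →
      ∃ i, Iso T₀ leafT₀ (Ts' i) (leafs' i))
    (hdistinct' : ∀ i j, i ≠ j → ¬ Iso (Ts' i) (leafs' i) (Ts' j) (leafs' j)) :
    (Finset.univ.sup' (Finset.univ_nonempty_iff.mpr ⟨⟨0, hm⟩⟩)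
        (fun i => (1 / m : ℝ) * (r : ℝ) ^ (-(psHard (Ts i) (leafs i) χ : ℤ) - 1)) =
      (1 / m : ℝ) * (r : ℝ) ^ (-(psSoft N leafN χ : ℤ) - 1)) ∧
    (psSoft N leafN χ ≤ psSoft N' leafN' χ ↔
      Finset.univ.sup' (Finset.univ_nonempty_iff.mpr ⟨⟨0, hm⟩⟩)
          (fun i => (1 / m : ℝ) * (r : ℝ) ^ (-(psHard (Ts' i) (leafs' i) χ : ℤ) - 1)) ≤
        Finset.univ.sup' (Finset.univ_nonempty_iff.mpr ⟨⟨0, hm⟩⟩)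
          (fun i => (1 / m : ℝ) * (r : ℝ) ^ (-(psHard (Ts i) (leafs i) χ : ℤ) - 1))) := by
  have hr1 : (1 : ℝ) < (r : ℝ) := by exact_mod_cast lt_of_lt_of_le one_lt_two hr
  have hc : (0 : ℝ) < (1 / m : ℝ) := by positivity
  have hsup : ∀ (f : Fin m → ℕ),
      Finset.univ.sup' (Finset.univ_nonempty_iff.mpr ⟨⟨0, hm⟩⟩)
        (fun i => (1 / m : ℝ) * (r : ℝ) ^ (-(f i : ℤ) - 1)) =
      (1 / m : ℝ) * (r : ℝ) ^
        (-((Finset.univ.inf' (Finset.univ_nonempty_iff.mpr (⟨⟨0, hm⟩⟩ : Nonempty (Fin m))) f : ℕ) : ℤ) - 1) := by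
    intro f
    set a := Finset.univ.inf' (Finset.univ_nonempty_iff.mpr (⟨⟨0, hm⟩⟩ : Nonempty (Fin m))) f with ha
    apply le_antisymm
    · apply Finset.sup'_le
      intro i _
      have hai : a ≤ f i := Finset.inf'_le _ (Finset.mem_univ i)
      have : (-(f i : ℤ) - 1) ≤ (-(a : ℤ) - 1) := by omega
      exact mul_le_mul_of_nonneg_left (zpow_le_zpow_right₀ hr1.le this) hc.le
    · obtain ⟨i₀, _, h₀⟩ := Finset.exists_mem_eq_inf'
        (Finset.univ_nonempty_iff.mpr ⟨⟨0, hm⟩⟩) f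
      rw [ha, h₀]
      exact Finset.le_sup' (fun i => (1 / m : ℝ) * (r : ℝ) ^ (-(f i : ℤ) - 1))
        (Finset.mem_univ i₀)
  have e1 := psSoft_eq_inf' hm N leafN χ W Ts roots leafs hTs hcover
  have e1' := psSoft_eq_inf' hm N' leafN' χ W' Ts' roots' leafs' hTs' hcover'
  constructor
  · rw [e1]
    exact hsup _
  · rw [hsup (fun i => psHard (Ts i) (leafs i) χ),
        hsup (fun i => psHard (Ts' i) (leafs' i) χ), ← e1, ← e1',
        mul_le_mul_iff_right₀ hc, zpow_le_zpow_iff_right₀ hr1]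
    omega
end

section
/- Let N be a rooted phylogenetic network on X, χ a character on X, T₂ a switching of N, and χ̄₂ an extension of χ to V(T₂) minimizing ch(χ̄₂,T₂). Then there exists an extension χ̄₃ of χ to V(T₂) with ch(χ̄₃,T₂) = ch(χ̄₂,T₂) such that for every edge (u,v) of T₂ that is a reticulation edge of N, χ̄₃(u) = χ̄₃(v). -/
open scoped Classical

open Digraph'

/-- vertices strictly reachable from `v` in `T` -/
private noncomputable def reachSet {V : Type} (T : Digraph' V) (v : V) : Finset V :=
  (T.edges.image Prod.snd).filter (fun w => Relation.TransGen (fun a b => (a, b) ∈ T.edges) v w)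

private lemma reach_lt {V : Type} (T : Digraph' V)
    (hac : ∀ v : V, ¬ Relation.TransGen (fun a b => (a, b) ∈ T.edges) v v)
    {v w : V} (hvw : (v, w) ∈ T.edges) :
    (reachSet T w).card < (reachSet T v).card := by
  have hsub : reachSet T w ⊆ reachSet T v := by
    intro x hx
    simp only [reachSet, Finset.mem_filter] at hx ⊢
    exact ⟨hx.1, Relation.TransGen.head hvw hx.2⟩
  have hw : w ∈ reachSet T v := by
    simp only [reachSet, Finset.mem_filter, Finset.mem_image]
    exact ⟨⟨(v, w), hvw, rfl⟩, Relation.TransGen.single hvw⟩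
  have hnw : w ∉ reachSet T w := by
    intro h
    simp only [reachSet, Finset.mem_filter] at h
    exact hac w h.2
  exact Finset.card_lt_card ((Finset.ssubset_iff_of_subset hsub).mpr ⟨w, hw, hnw⟩)

/-- a minimal extension on a switching can be modified, keeping the
    changing number, so that every surviving reticulation edge has equal endpoint
    states. -/
theorem stmt17 {V X C : Type} (N : Digraph' V) (rootN : V) (leafN : X → V)
    (hN : IsPhyloNetwork N rootN leafN) (χ : X → C)
    (T₂ : Digraph' V) (hsw : IsSwitching N T₂)
    (f₂ : V → C) (hext : Extends leafN χ f₂)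
    (hmin : ∀ g : V → C, Extends leafN χ g → ch T₂ f₂ ≤ ch T₂ g) :
    ∃ f₃ : V → C, Extends leafN χ f₃ ∧ ch T₂ f₃ = ch T₂ f₂ ∧
      ∀ e ∈ T₂.edges, 2 ≤ N.indeg e.2 → f₃ e.1 = f₃ e.2 := by
  classical
  have hac : ∀ v : V, ¬ Relation.TransGen (fun a b => (a, b) ∈ T₂.edges) v v := by
    intro v hv
    have hmono : ∀ a b, Relation.TransGen (fun a b => (a, b) ∈ T₂.edges) a b →
        Relation.TransGen (fun a b => (a, b) ∈ N.edges) a b := by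
      intro a b h
      induction h with
      | single h => exact Relation.TransGen.single (hsw.1 h)
      | tail _ h ih => exact Relation.TransGen.tail ih (hsw.1 h)
    exact hN.acyclic v (hmono v v hv)
  set bad : (V → C) → Finset (V × V) :=
    fun f => T₂.edges.filter (fun e => 2 ≤ N.indeg e.2 ∧ f e.1 ≠ f e.2) with hbad
  set Φ : (V → C) → ℕ := fun f => ∑ e ∈ bad f, ((reachSet T₂ e.2).card + 1) with hΦdef
  suffices key : ∀ n : ℕ, ∀ f : V → C, Extends leafN χ f → ch T₂ f = ch T₂ f₂ → Φ f ≤ n →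
      ∃ f₃ : V → C, Extends leafN χ f₃ ∧ ch T₂ f₃ = ch T₂ f₂ ∧
        ∀ e ∈ T₂.edges, 2 ≤ N.indeg e.2 → f₃ e.1 = f₃ e.2 by
    exact key (Φ f₂) f₂ hext rfl le_rfl
  intro n
  induction n with
  | zero =>
      intro f hf hch hΦ0
      refine ⟨f, hf, hch, ?_⟩
      intro e he hret
      by_contra hne
      have hmem : e ∈ bad f := Finset.mem_filter.mpr ⟨he, hret, hne⟩
      have hle : (reachSet T₂ e.2).card + 1 ≤ Φ f :=
        Finset.single_le_sum (f := fun e => (reachSet T₂ e.2).card + 1)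
          (fun i _ => Nat.zero_le _) hmem
      omega
  | succ n ih =>
      intro f hf hch hΦn
      by_cases hb : bad f = ∅
      · refine ⟨f, hf, hch, ?_⟩
        intro e he hret
        by_contra hne
        have hmem : e ∈ bad f := Finset.mem_filter.mpr ⟨he, hret, hne⟩
        simp [hb] at hmem
      · obtain ⟨⟨u, v⟩, he₀⟩ := Finset.nonempty_iff_ne_empty.mpr hb
        obtain ⟨heT, hret, hne⟩ := Finset.mem_filter.mp he₀
        have hretv : 2 ≤ N.indeg v := hret
        have huv : u ≠ v := fun h => hne (by rw [h])
        -- v is a reticulation: not a leaf, not the root, has N-outdegree 1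
        have hnotleaf : ¬ ∃ x, leafN x = v := by
          rintro ⟨x, hx⟩
          have h1 := ((hN.leaf_iff v).mp ⟨x, hx⟩).1
          omega
        have hvroot : v ≠ rootN := by
          intro h
          rw [h, hN.root_in] at hretv
          omega
        have hout1 : N.outdeg v = 1 := by
          rcases hN.internal v hvroot hnotleaf with ⟨h1, _⟩ | ⟨_, h2⟩
          · omega
          · exact h2
        have houtT : (T₂.edges.filter fun e => e.1 = v).card ≤ 1 := by
          have hsubs : (T₂.edges.filter fun e => e.1 = v)
              ⊆ (N.edges.filter fun e => e.1 = v) :=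
            Finset.filter_subset_filter _ hsw.1
          calc (T₂.edges.filter fun e => e.1 = v).card
              ≤ (N.edges.filter fun e => e.1 = v).card := Finset.card_le_card hsubs
            _ = 1 := hout1
        have hin1 : (T₂.edges.filter fun e => e.2 = v).card = 1 := hsw.2.2 v hretv
        have hin_unique : ∀ e ∈ T₂.edges, e.2 = v → e = (u, v) := by
          intro e he hev
          have h1 : e ∈ T₂.edges.filter fun e => e.2 = v := Finset.mem_filter.mpr ⟨he, hev⟩
          have h2 : (u, v) ∈ T₂.edges.filter fun e => e.2 = v :=
            Finset.mem_filter.mpr ⟨heT, rfl⟩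
          exact Finset.card_le_one.mp (le_of_eq hin1) _ h1 _ h2
        -- the local move
        set g : V → C := fun x => if x = v then f u else f x with hg
        have hgu : g u = f u := by simp [hg, huv]
        have hgv : g v = f u := by simp [hg]
        have hgne : ∀ x, x ≠ v → g x = f x := by
          intro x hx; simp [hg, hx]
        have hgext : Extends leafN χ g := by
          intro x
          have hxne : leafN x ≠ v := by
            intro h
            have h1 := ((hN.leaf_iff (leafN x)).mp ⟨x, rfl⟩).1
            rw [h] at h1
            omega
          rw [hgne _ hxne, hf x]
        have hchle : ch T₂ g ≤ ch T₂ f := by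
          unfold ch
          apply Finset.card_le_card_of_injOn (fun e => if e.1 = v then (u, v) else e)
          · intro e he
            simp only [Finset.mem_coe, Finset.mem_filter] at he ⊢
            by_cases h1 : e.1 = v
            · rw [if_pos h1]
              exact ⟨heT, hne⟩
            · rw [if_neg h1]
              have h2 : e.2 ≠ v := by
                intro h2
                have heq := hin_unique e he.1 h2
                rw [heq] at he
                exact he.2 (hgu.trans hgv.symm)
              refine ⟨he.1, ?_⟩
              intro hfe
              exact he.2 (by rw [hgne _ h1, hgne _ h2]; exact hfe)
          · intro e he e' he' hee
            simp only [Finset.coe_filter, Set.mem_setOf_eq] at he he'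
            by_cases h1 : e.1 = v <;> by_cases h2 : e'.1 = v
            · have hm : e ∈ T₂.edges.filter fun e => e.1 = v :=
                Finset.mem_filter.mpr ⟨he.1, h1⟩
              have hm' : e' ∈ T₂.edges.filter fun e => e.1 = v :=
                Finset.mem_filter.mpr ⟨he'.1, h2⟩
              exact Finset.card_le_one.mp houtT _ hm _ hm'
            · simp only [if_pos h1, if_neg h2] at hee
              exfalso
              apply he'.2
              rw [← hee]
              exact hgu.trans hgv.symm
            · simp only [if_neg h1, if_pos h2] at hee
              exfalso
              apply he.2
              rw [hee]
              exact hgu.trans hgv.symm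
            · simpa only [if_neg h1, if_neg h2] using hee
        have hchg : ch T₂ g = ch T₂ f₂ :=
          le_antisymm (hch ▸ hchle) (hmin g hgext)
        -- the measure strictly decreases
        have hsubbad : bad g ⊆ (bad f).erase (u, v) ∪ (T₂.edges.filter fun e => e.1 = v) := by
          intro e he
          rw [hbad, Finset.mem_filter] at he
          obtain ⟨heE, hrete, hnee⟩ := he
          by_cases h1 : e.1 = v
          · exact Finset.mem_union_right _ (Finset.mem_filter.mpr ⟨heE, h1⟩)
          · have h2 : e.2 ≠ v := by
              intro h2
              have heq := hin_unique e heE h2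
              rw [heq] at hnee
              exact hnee (hgu.trans hgv.symm)
            refine Finset.mem_union_left _ (Finset.mem_erase.mpr ⟨?_, ?_⟩)
            · intro h
              apply h2
              rw [h]
            · rw [hbad, Finset.mem_filter]
              refine ⟨heE, hrete, ?_⟩
              intro hfe
              exact hnee (by rw [hgne _ h1, hgne _ h2]; exact hfe)
        have houtsum : ∑ e ∈ (T₂.edges.filter fun e => e.1 = v),
            ((reachSet T₂ e.2).card + 1) ≤ (reachSet T₂ v).card := by
          rcases Finset.eq_empty_or_nonempty (T₂.edges.filter fun e => e.1 = v) with
            hE | ⟨e₁, he₁⟩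
          · simp [hE]
          · have hsing : (T₂.edges.filter fun e => e.1 = v) = {e₁} :=
              Finset.eq_singleton_iff_unique_mem.mpr
                ⟨he₁, fun x hx => Finset.card_le_one.mp houtT _ hx _ he₁⟩
            rw [hsing, Finset.sum_singleton]
            have he₁' := Finset.mem_filter.mp he₁
            have hmem : (v, e₁.2) ∈ T₂.edges := by
              rw [← he₁'.2]
              exact he₁'.1
            have hlt := reach_lt T₂ hac hmem
            omega
        have hΦdecomp : Φ f = (∑ e ∈ (bad f).erase (u, v), ((reachSet T₂ e.2).card + 1))
            + ((reachSet T₂ v).card + 1) :=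
          (Finset.sum_erase_add _ _ he₀).symm
        have hΦg : Φ g < Φ f := by
          have h1 : Φ g ≤ ∑ e ∈ (bad f).erase (u, v) ∪ (T₂.edges.filter fun e => e.1 = v),
              ((reachSet T₂ e.2).card + 1) :=
            Finset.sum_le_sum_of_subset hsubbad
          have h2 : ∑ e ∈ (bad f).erase (u, v) ∪ (T₂.edges.filter fun e => e.1 = v),
              ((reachSet T₂ e.2).card + 1)
              ≤ (∑ e ∈ (bad f).erase (u, v), ((reachSet T₂ e.2).card + 1))
                + ∑ e ∈ (T₂.edges.filter fun e => e.1 = v), ((reachSet T₂ e.2).card + 1) := by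
            have h3 := Finset.sum_union_inter (s₁ := (bad f).erase (u, v))
              (s₂ := T₂.edges.filter fun e => e.1 = v)
              (f := fun e => (reachSet T₂ e.2).card + 1)
            omega
          omega
        exact ih g hgext hchg (by omega)
end
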